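/- arXiv:2008.08539 — 3 statements merged into one kernel-verified Lean document; each statement's English description precedes it below -/
import Mathlib

section
/- Let 0 < q < p ≤ 1 and let S_p = S_{p,p} and S_q = S_{q,q} be generalised hyperbolic spirals. If f : S_p → S_q is a surjective α-Hölder map, then α ≤ (p + q)/(2p). -/
set_option maxHeartbeats 2000000


open Set Metric MeasureTheory

noncomputable def spiral (p q : ℝ) : Set ℂ :=
  {z : ℂ | ∃ t : ℝ, 1 < t ∧
    z = (t ^ (-p) * Real.cos t : ℝ) + (t ^ (-q) * Real.sin t : ℝ) * Complex.I}

/-- `f` is `α`-Hölder on the set `A`. -/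
def HolderOnSet (f : ℂ → ℂ) (α : ℝ) (A : Set ℂ) : Prop :=
  ∃ c : ℝ, 0 < c ∧ ∀ x ∈ A, ∀ y ∈ A, dist (f x) (f y) ≤ c * dist x y ^ α

namespace SpiralAux

noncomputable def zf (e t : ℝ) : ℂ := ((t ^ (-e) : ℝ) : ℂ) * Complex.exp ((t : ℂ) * Complex.I)

lemma zf_eq (e t : ℝ) :
    zf e t = ((t ^ (-e) * Real.cos t : ℝ) : ℂ) + ((t ^ (-e) * Real.sin t : ℝ) : ℂ) * Complex.I := by
  rw [zf, Complex.exp_mul_I, ← Complex.ofReal_cos, ← Complex.ofReal_sin]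
  push_cast
  ring

lemma zf_mem {e t : ℝ} (ht : 1 < t) : zf e t ∈ spiral e e := ⟨t, ht, zf_eq e t⟩

lemma mem_iff {e : ℝ} {z : ℂ} : z ∈ spiral e e ↔ ∃ t, 1 < t ∧ z = zf e t := by
  constructor
  · rintro ⟨t, ht, rfl⟩
    exact ⟨t, ht, (zf_eq e t).symm⟩
  · rintro ⟨t, ht, rfl⟩
    exact ⟨t, ht, zf_eq e t⟩

lemma abs_zf (e : ℝ) {t : ℝ} (ht : 0 < t) : ‖zf e t‖ = t ^ (-e) := by
  rw [zf, norm_mul, Complex.norm_real, Real.norm_eq_abs, Complex.norm_exp_ofReal_mul_I, mul_one,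
    abs_of_pos (Real.rpow_pos_of_pos ht _)]

lemma rpow_anti {e a b : ℝ} (he : 0 ≤ e) (ha : 0 < a) (hab : a ≤ b) : b ^ (-e) ≤ a ^ (-e) := by
  rw [Real.rpow_neg ha.le, Real.rpow_neg (ha.trans_le hab).le]
  exact inv_anti₀ (Real.rpow_pos_of_pos ha e) (Real.rpow_le_rpow ha.le hab he)

lemma param_eq {e t T : ℝ} (he : e ≠ 0) (ht : 0 < t) (hT : 0 < T)
    (h : t ^ (-e) = T ^ (-e)) : t = T := by
  have h1 : ∀ x : ℝ, 0 < x → (x ^ (-e)) ^ (-e⁻¹) = x := by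
    intro x hx
    rw [← Real.rpow_mul hx.le, neg_mul_neg, mul_inv_cancel₀ he, Real.rpow_one]
  rw [← h1 t ht, ← h1 T hT, h]

lemma dist_zf_pair (e : ℝ) {a : ℝ} (ha : 0 < a) :
    dist (zf e a) (zf e (a + Real.pi)) = a ^ (-e) + (a + Real.pi) ^ (-e) := by
  have hπ : (0:ℝ) < a + Real.pi := by linarith [Real.pi_pos]
  have h1 : zf e a - zf e (a + Real.pi)
      = ((a ^ (-e) + (a + Real.pi) ^ (-e) : ℝ) : ℂ) * Complex.exp ((a : ℂ) * Complex.I) := by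
    rw [zf, zf]
    push_cast
    rw [add_mul, Complex.exp_add, Complex.exp_pi_mul_I]
    ring
  rw [Complex.dist_eq, h1, norm_mul, Complex.norm_real, Real.norm_eq_abs, Complex.norm_exp_ofReal_mul_I, mul_one,
    abs_of_pos (by positivity)]

lemma exp_I_lip (a b : ℝ) :
    ‖Complex.exp ((a:ℂ) * Complex.I) - Complex.exp ((b:ℂ) * Complex.I)‖ ≤ |a - b| := by
  have hd : ∀ t : ℝ, HasDerivAt (fun s : ℝ => Complex.exp ((s:ℂ) * Complex.I))
      (Complex.exp ((t:ℂ) * Complex.I) * Complex.I) t := by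
    intro t
    have h1 : HasDerivAt (fun s : ℝ => (s:ℂ) * Complex.I) Complex.I t := by
      simpa using (Complex.ofRealCLM.hasDerivAt (x := t)).mul_const Complex.I
    exact h1.cexp
  have h2 := convex_univ.norm_image_sub_le_of_norm_hasDerivWithin_le
    (f' := fun t : ℝ => Complex.exp ((t:ℂ) * Complex.I) * Complex.I)
    (fun x _ => (hd x).hasDerivWithinAt)
    (fun x _ => by
      rw [norm_mul, Complex.norm_exp_ofReal_mul_I,
        Complex.norm_I, one_mul])
    (mem_univ b) (mem_univ a)
  simpa [Real.norm_eq_abs] using h2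

lemma dist_zf_le {e : ℝ} {a b : ℝ} (he : 0 ≤ e) (ha : 0 < a) (hab : a ≤ b) :
    dist (zf e a) (zf e b) ≤ (a ^ (-e) - b ^ (-e)) + b ^ (-e) * (b - a) := by
  have hb : 0 < b := ha.trans_le hab
  have h1 : zf e a - zf e b = ((a ^ (-e) - b ^ (-e) : ℝ) : ℂ) * Complex.exp ((a:ℂ) * Complex.I)
      + ((b ^ (-e) : ℝ) : ℂ) * (Complex.exp ((a:ℂ) * Complex.I) - Complex.exp ((b:ℂ) * Complex.I)) := by
    rw [zf, zf]
    push_cast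
    ring
  rw [Complex.dist_eq, h1]
  refine (norm_add_le _ _).trans ?_
  rw [norm_mul, norm_mul, Complex.norm_real, Complex.norm_real, Real.norm_eq_abs, Real.norm_eq_abs, Complex.norm_exp_ofReal_mul_I,
    mul_one]
  have h2 : |a ^ (-e) - b ^ (-e)| = a ^ (-e) - b ^ (-e) :=
    abs_of_nonneg (sub_nonneg.mpr (rpow_anti he ha hab))
  have h3 : |b ^ (-e)| = b ^ (-e) := abs_of_pos (Real.rpow_pos_of_pos hb _)
  rw [h2, h3]
  have h4 := exp_I_lip a b
  have h5 : |a - b| = b - a := by rw [abs_sub_comm]; exact abs_of_nonneg (by linarith)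
  rw [h5] at h4
  have h6 : (0:ℝ) ≤ b ^ (-e) := (Real.rpow_pos_of_pos hb _).le
  have h7 := mul_le_mul_of_nonneg_left h4 h6
  linarith

lemma bern {t a b : ℝ} (ht0 : 0 ≤ t) (ht1 : t ≤ 1) (ha : 1 ≤ a) (hab : a ≤ b) :
    t * (b ^ (t - 1) * (b - a)) ≤ b ^ t - a ^ t := by
  have hb : (0:ℝ) < b := lt_of_lt_of_le one_pos (ha.trans hab)
  have ha0 : (0:ℝ) < a := lt_of_lt_of_le one_pos ha
  have hs : (-1:ℝ) ≤ (a - b) / b := by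
    rw [le_div_iff₀ hb]; linarith
  have h1 := rpow_one_add_le_one_add_mul_self hs ht0 ht1
  have h2 : 1 + (a - b) / b = a / b := by field_simp; ring
  rw [h2] at h1
  rw [Real.div_rpow ha0.le hb.le] at h1
  have hbt : (0:ℝ) < b ^ t := Real.rpow_pos_of_pos hb t
  have h4 := mul_le_mul_of_nonneg_right h1 hbt.le
  have hbne : b ≠ 0 := hb.ne'
  have h5 : a ^ t / b ^ t * b ^ t = a ^ t := by field_simp
  rw [h5] at h4
  have h6 : b ^ (t - 1) = b ^ t / b := by rw [Real.rpow_sub hb, Real.rpow_one]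
  have h7 : (1 + t * ((a - b) / b)) * b ^ t = b ^ t + t * (b ^ t / b * (a - b)) := by
    field_simp
  rw [h7] at h4
  rw [h6]
  nlinarith [h4]

lemma holder_continuousOn {f : ℂ → ℂ} {A : Set ℂ} {α c : ℝ} (hα : 0 < α) (hc : 0 < c)
    (hf : ∀ x ∈ A, ∀ y ∈ A, dist (f x) (f y) ≤ c * dist x y ^ α) :
    ContinuousOn f A := by
  rw [Metric.continuousOn_iff]
  intro x hx ε hε
  refine ⟨(ε / (2 * c)) ^ α⁻¹, Real.rpow_pos_of_pos (by positivity) _, ?_⟩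
  intro y hy hyx
  have h1 : dist (f y) (f x) ≤ c * dist y x ^ α := hf y hy x hx
  have h2 : dist y x ^ α < ((ε / (2 * c)) ^ α⁻¹) ^ α := Real.rpow_lt_rpow dist_nonneg hyx hα
  rw [← Real.rpow_mul (by positivity), inv_mul_cancel₀ (ne_of_gt hα), Real.rpow_one] at h2
  have h3 : c * (ε / (2 * c)) = ε / 2 := by field_simp
  have h4 : c * dist y x ^ α < ε / 2 := by
    calc c * dist y x ^ α < c * (ε / (2 * c)) := by
          exact mul_lt_mul_of_pos_left h2 hc
      _ = ε / 2 := h3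
  linarith

lemma gen_ivt {J : ℝ → ℝ} {sA sB : ℝ} (hAB : sA ≤ sB)
    (hJ : ContinuousOn J (Icc sA sB)) (K : ℕ) (R : ℕ → ℝ)
    (hA : J sA = R 0) (hB : J sB = R K)
    (hR : ∀ k, k < K → R (k + 1) ∈ uIcc (R k) (R K)) :
    ∃ v : ℕ → ℝ, (∀ i, i ≤ K → v i ∈ Icc sA sB ∧ J (v i) = R i) ∧
      (∀ i, i < K → v i ≤ v (i + 1)) := by
  have H : ∀ k, k ≤ K → ∃ v : ℕ → ℝ, (∀ i, i ≤ k → v i ∈ Icc sA sB ∧ J (v i) = R i) ∧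
      (∀ i, i < k → v i ≤ v (i + 1)) := by
    intro k
    induction k with
    | zero =>
      intro _
      refine ⟨fun _ => sA, ?_, fun i hi => le_rfl⟩
      intro i hi
      obtain rfl := Nat.le_zero.mp hi
      exact ⟨left_mem_Icc.mpr hAB, hA⟩
    | succ k ih =>
      intro hk
      obtain ⟨v, hv1, hv2⟩ := ih (Nat.le_of_succ_le hk)
      obtain ⟨hvmem, hvJ⟩ := hv1 k le_rfl
      have hksB : v k ≤ sB := hvmem.2
      have hsub : uIcc (v k) sB ⊆ Icc sA sB := by
        rw [uIcc_of_le hksB]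
        exact Icc_subset_Icc hvmem.1 le_rfl
      have hmem : R (k + 1) ∈ uIcc (J (v k)) (J sB) := by
        rw [hvJ, hB]
        exact hR k (Nat.lt_of_succ_le hk)
      obtain ⟨s, hs, hJs⟩ := intermediate_value_uIcc (hJ.mono hsub) hmem
      rw [uIcc_of_le hksB] at hs
      refine ⟨Function.update v (k + 1) s, ?_, ?_⟩
      · intro i hi
        rcases eq_or_lt_of_le hi with h | h
        · subst h
          rw [Function.update_self]
          exact ⟨⟨hvmem.1.trans hs.1, hs.2⟩, hJs⟩
        · have hik : i ≤ k := Nat.lt_succ_iff.mp h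
          rw [Function.update_of_ne (by omega)]
          exact hv1 i hik
      · intro i hi
        rcases eq_or_lt_of_le (Nat.lt_succ_iff.mp hi) with h | h
        · subst h
          rw [Function.update_of_ne (by omega), Function.update_self]
          exact hs.1
        · rw [Function.update_of_ne (by omega), Function.update_of_ne (by omega)]
          exact hv2 i h
  exact H K le_rfl

end SpiralAux

open SpiralAux

theorem holder_exponent_bound_hyperbolic (p q α : ℝ) (f : ℂ → ℂ)
    (hq : 0 < q) (hqp : q < p) (hp1 : p ≤ 1)
    (hα0 : 0 < α) (hα1 : α ≤ 1)
    (hsurj : f '' spiral p p = spiral q q)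
    (hf : HolderOnSet f α (spiral p p)) :
    α ≤ (p + q) / (2 * p) := by
  by_contra hcon
  push_neg at hcon
  obtain ⟨c, hc, hfc⟩ := hf
  have hp : 0 < p := hq.trans hqp
  have hq1 : q < 1 := lt_of_lt_of_le hqp hp1
  have hαne : α ≠ 0 := ne_of_gt hα0
  -- choice of p'
  set p' : ℝ := max 0 (1 + p - (p + q) / (2 * q)) with hp'def
  have hp'0 : 0 ≤ p' := le_max_left _ _
  have hpq2q : p < (p + q) / (2 * q) := by
    rw [lt_div_iff₀ (by positivity)]
    nlinarith [mul_pos hp (sub_pos.mpr hq1), mul_nonneg hq.le (sub_nonneg.mpr hp1)]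
  have hp'1 : p' < 1 := by
    apply max_lt one_pos
    linarith
  have hp'p : p' ≤ p := by
    apply max_le hp.le
    have h1 : (1:ℝ) ≤ (p + q) / (2 * q) := by
      rw [le_div_iff₀ (by positivity)]
      linarith
    linarith
  have hkey : 1 + p - p' ≤ (p + q) / (2 * q) := by
    have := le_max_right 0 (1 + p - (p + q) / (2 * q))
    have h2 : 1 + p - (p + q) / (2 * q) ≤ p' := this
    linarith
  set u : ℝ := q / α with hu
  have hu0 : 0 < u := div_pos hq hα0
  have hustrict : u < 2 * p * q / (p + q) := by
    have h1 : (0:ℝ) < (p + q) / (2 * p) := by positivity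
    have h2 : u < q / ((p + q) / (2 * p)) := div_lt_div_of_pos_left hq h1 hcon
    have h3 : q / ((p + q) / (2 * p)) = 2 * p * q / (p + q) := by
      field_simp
    linarith [h3 ▸ h2]
  have h1pp' : 0 < 1 + p - p' := by linarith
  set m : ℝ := u * (1 + p - p') / p with hm_def
  have hm0 : 0 < m := by positivity
  have hm1 : m < 1 := by
    have h2 : u * (1 + p - p') ≤ u * ((p + q) / (2 * q)) :=
      mul_le_mul_of_nonneg_left hkey hu0.le
    have h3 : u * ((p + q) / (2 * q)) < (2 * p * q / (p + q)) * ((p + q) / (2 * q)) :=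
      mul_lt_mul_of_pos_right hustrict (by positivity)
    have h4 : (2 * p * q / (p + q)) * ((p + q) / (2 * q)) = p := by
      field_simp
    rw [hm_def, div_lt_one hp]
    linarith
  set w : ℝ := (1 - p') / p with hw
  have hw0 : 0 ≤ w := div_nonneg (by linarith) hp.le
  have hmw : u * w + u = m := by
    rw [hw, hm_def]
    field_simp
    ring
  -- continuity of f on the spiral
  have hfcont : ContinuousOn f (spiral p p) := holder_continuousOn hα0 hc hfc
  -- preimages
  have hpre : ∀ τ : ℝ, 1 < τ → ∃ s : ℝ, 1 < s ∧ f (zf p s) = zf q τ := by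
    intro τ hτ
    have hz : zf q τ ∈ spiral q q := zf_mem hτ
    rw [← hsurj] at hz
    obtain ⟨x, hxP, hfx⟩ := hz
    obtain ⟨s, hs, rfl⟩ := mem_iff.mp hxP
    exact ⟨s, hs, hfx⟩
  have hid : ∀ s τ : ℝ, 1 < s → 1 < τ → ‖f (zf p s)‖ = τ ^ (-q) →
      f (zf p s) = zf q τ := by
    intro s τ hs hτ hJs
    have h1 : f (zf p s) ∈ spiral q q := by
      rw [← hsurj]
      exact mem_image_of_mem f (zf_mem hs)
    obtain ⟨t, ht, heq⟩ := mem_iff.mp h1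
    have h2 : ‖f (zf p s)‖ = t ^ (-q) := by
      rw [heq]
      exact abs_zf q (by linarith)
    have h3 : t = τ := param_eq (ne_of_gt hq) (by linarith) (by linarith) (by rw [← h2, hJs])
    rw [heq, h3]
  have hJcont : ∀ a b : ℝ, 1 < a → ContinuousOn (fun s => ‖f (zf p s)‖) (Icc a b) := by
    intro a b hagt
    have hzf : ContinuousOn (zf p) (Icc a b) := by
      apply ContinuousOn.mul
      · apply Complex.continuous_ofReal.comp_continuousOn
        apply ContinuousOn.rpow_const continuousOn_id
        intro x hx
        left
        have : (1:ℝ) < x := lt_of_lt_of_le hagt hx.1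
        positivity
      · exact (Complex.continuous_exp.comp
          (Complex.continuous_ofReal.mul continuous_const)).continuousOn
    have hmaps : MapsTo (zf p) (Icc a b) (spiral p p) := fun x hx =>
      zf_mem (lt_of_lt_of_le hagt hx.1)
    exact continuous_norm.comp_continuousOn (hfcont.comp hzf hmaps)
  -- master inequality
  have master : ∀ K : ℕ, 1 ≤ K →
      ((K:ℝ) - 1) * ((2 + Real.pi * (K:ℝ)) ^ (-q) / c) ^ α⁻¹ ≤
        1 + (1 - p')⁻¹ *
          ((2 / ((2 + Real.pi * (K:ℝ)) ^ (-q) / c) ^ α⁻¹) ^ p⁻¹) ^ (1 - p') := by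
    intro K hK
    set T : ℝ := 2 + Real.pi * (K:ℝ) with hT
    have hπpos := Real.pi_pos
    have hπK : (0:ℝ) ≤ Real.pi * (K:ℝ) := by positivity
    have hT2 : (2:ℝ) ≤ T := by rw [hT]; linarith
    have hT1 : (1:ℝ) < T := by linarith
    have hT0 : (0:ℝ) < T := by linarith
    set D : ℝ := T ^ (-q) with hD
    have hD0 : 0 < D := Real.rpow_pos_of_pos hT0 _
    set ε : ℝ := (D / c) ^ α⁻¹ with hεdef
    have hε0 : 0 < ε := Real.rpow_pos_of_pos (by positivity) _
    set V : ℝ := (2 / ε) ^ p⁻¹ with hV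
    -- construct crossing sequence
    obtain ⟨s0, hs0, hfs0⟩ := hpre 2 one_lt_two
    obtain ⟨sK, hsK, hfsK⟩ := hpre T hT1
    have hvex : ∃ v : ℕ → ℝ, (∀ i, i ≤ K → 1 < v i) ∧ (∀ i, i < K → v i ≤ v (i + 1)) ∧
        (∀ i, i < K → D ≤ dist (f (zf p (v i))) (f (zf p (v (i + 1))))) := by
      rcases le_total s0 sK with hss | hss
      · -- increasing case
        obtain ⟨v, hv1, hv2⟩ := gen_ivt hss (hJcont s0 sK hs0) K
          (fun i => (2 + Real.pi * (i:ℝ)) ^ (-q))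
          (by rw [hfs0, abs_zf q (by norm_num : (0:ℝ) < 2)]; norm_num)
          (by rw [hfsK, abs_zf q hT0, hT])
          (by
            intro k hk
            rw [mem_uIcc]
            right
            have hk1 : ((k:ℝ) + 1) ≤ (K:ℝ) := by exact_mod_cast Nat.succ_le_of_lt hk
            have hmA := mul_le_mul_of_nonneg_left hk1 Real.pi_pos.le
            have hkk : (k:ℝ) ≤ (k:ℝ) + 1 := by linarith
            have hmB := mul_le_mul_of_nonneg_left hkk Real.pi_pos.le
            constructor
            · apply rpow_anti hq.le (by positivity)
              push_cast
              linarith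
            · apply rpow_anti hq.le (by positivity)
              push_cast
              linarith)
        have hτ1 : ∀ i : ℕ, i ≤ K → (1:ℝ) < 2 + Real.pi * (i:ℝ) := by
          intro i hi
          have : (0:ℝ) ≤ Real.pi * (i:ℝ) := by positivity
          linarith
        have hv1' : ∀ i, i ≤ K → 1 < v i := fun i hi => lt_of_lt_of_le hs0 ((hv1 i hi).1.1)
        refine ⟨v, hv1', hv2, ?_⟩
        intro i hi
        have hi' : i + 1 ≤ K := Nat.succ_le_of_lt hi
        have hJvi : ‖f (zf p (v i))‖ = (2 + Real.pi * (i:ℝ)) ^ (-q) :=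
          (hv1 i hi.le).2
        have hJvi1 : ‖f (zf p (v (i+1)))‖ = (2 + Real.pi * ((i:ℕ)+1:ℕ)) ^ (-q) :=
          (hv1 (i+1) hi').2
        have e1 : f (zf p (v i)) = zf q (2 + Real.pi * (i:ℝ)) :=
          hid _ _ (hv1' i hi.le) (hτ1 i hi.le) hJvi
        have e2 : f (zf p (v (i+1))) = zf q ((2 + Real.pi * (i:ℝ)) + Real.pi) := by
          have h := hid _ _ (hv1' (i+1) hi') (hτ1 (i+1) hi') hJvi1
          rw [h]
          congr 1
          push_cast
          ring
        rw [e1, e2, dist_zf_pair q (by positivity)]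
        have hle : (2 + Real.pi * (i:ℝ)) ≤ T := by
          rw [hT]
          have hiK : (i:ℝ) ≤ (K:ℝ) := by exact_mod_cast hi.le
          have := mul_le_mul_of_nonneg_left hiK Real.pi_pos.le
          linarith
        have h4 : D ≤ (2 + Real.pi * (i:ℝ)) ^ (-q) := rpow_anti hq.le (by positivity) hle
        have h5 : (0:ℝ) ≤ ((2 + Real.pi * (i:ℝ)) + Real.pi) ^ (-q) :=
          (Real.rpow_pos_of_pos (by positivity) _).le
        linarith
      · -- decreasing case
        obtain ⟨v, hv1, hv2⟩ := gen_ivt hss (hJcont sK s0 hsK) K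
          (fun i => (2 + Real.pi * ((K:ℝ) - (i:ℝ))) ^ (-q))
          (by rw [hfsK, abs_zf q hT0, hT]; norm_num)
          (by rw [hfs0, abs_zf q (by norm_num : (0:ℝ) < 2)]; norm_num)
          (by
            intro k hk
            have hπ := Real.pi_pos
            have hk1 : ((k:ℝ) + 1) ≤ (K:ℝ) := by exact_mod_cast Nat.succ_le_of_lt hk
            have hd0 : (0:ℝ) ≤ (K:ℝ) - ((k:ℝ) + 1) := by linarith
            have hd1 := mul_nonneg Real.pi_pos.le hd0
            have hb1 : (0:ℝ) < 2 + Real.pi * ((K:ℝ) - ((k+1 : ℕ):ℝ)) := by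
              push_cast
              linarith
            have hbK : (0:ℝ) < 2 + Real.pi * ((K:ℝ) - ((K : ℕ):ℝ)) := by
              rw [sub_self, mul_zero]
              norm_num
            have hd2 : (K:ℝ) - ((k:ℝ) + 1) ≤ (K:ℝ) - (k:ℝ) := by linarith
            have hd3 := mul_le_mul_of_nonneg_left hd2 Real.pi_pos.le
            have hd4 : Real.pi * ((K:ℝ) - (K:ℝ)) = 0 := by rw [sub_self, mul_zero]
            rw [mem_uIcc]
            left
            refine ⟨rpow_anti hq.le hb1 ?_, rpow_anti hq.le hbK ?_⟩
            · push_cast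
              linarith
            · push_cast
              linarith)
        have hτ1 : ∀ i : ℕ, i ≤ K → (1:ℝ) < 2 + Real.pi * ((K:ℝ) - (i:ℝ)) := by
          intro i hi
          have h0 : (0:ℝ) ≤ (K:ℝ) - (i:ℝ) := by
            have : (i:ℝ) ≤ (K:ℝ) := by exact_mod_cast hi
            linarith
          have := mul_nonneg Real.pi_pos.le h0
          linarith
        have hv1' : ∀ i, i ≤ K → 1 < v i := fun i hi => lt_of_lt_of_le hsK ((hv1 i hi).1.1)
        refine ⟨v, hv1', hv2, ?_⟩
        intro i hi
        have hi' : i + 1 ≤ K := Nat.succ_le_of_lt hi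
        have e1 : f (zf p (v i)) = zf q (2 + Real.pi * ((K:ℝ) - (i:ℝ))) :=
          hid _ _ (hv1' i hi.le) (hτ1 i hi.le) (hv1 i hi.le).2
        have e2 : f (zf p (v (i+1))) = zf q (2 + Real.pi * ((K:ℝ) - ((i:ℕ)+1:ℕ))) :=
          hid _ _ (hv1' (i+1) hi') (hτ1 (i+1) hi') (hv1 (i+1) hi').2
        set a : ℝ := 2 + Real.pi * ((K:ℝ) - ((i:ℝ) + 1)) with haa
        have ha0 : (0:ℝ) < a := by
          have := hτ1 (i+1) hi'
          push_cast at this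
          rw [haa]
          linarith
        have e1' : f (zf p (v i)) = zf q (a + Real.pi) := by
          rw [e1]
          congr 1
          rw [haa]
          ring
        have e2' : f (zf p (v (i+1))) = zf q a := by
          rw [e2]
          congr 1
          rw [haa]
          push_cast
          ring
        rw [e1', e2', dist_comm, dist_zf_pair q ha0]
        have hle : a + Real.pi ≤ T := by
          rw [haa, hT]
          have h0 : (0:ℝ) ≤ (i:ℝ) := by positivity
          have hexp : Real.pi * ((K:ℝ) - ((i:ℝ) + 1)) + Real.pi
              = Real.pi * ((K:ℝ) - (i:ℝ)) := by ring
          have h1 : (K:ℝ) - (i:ℝ) ≤ (K:ℝ) := by linarith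
          have h2 := mul_le_mul_of_nonneg_left h1 Real.pi_pos.le
          linarith
        have h4 : D ≤ (a + Real.pi) ^ (-q) := rpow_anti hq.le (by linarith [Real.pi_pos]) hle
        have h5 : (0:ℝ) ≤ a ^ (-q) := (Real.rpow_pos_of_pos ha0 _).le
        linarith
    obtain ⟨v, hv1, hv2, hv3⟩ := hvex
    -- Hölder separation
    have hstepb : ∀ i, i < K → ε ≤ dist (zf p (v i)) (zf p (v (i + 1))) := by
      intro i hi
      have h1 := hfc _ (zf_mem (hv1 i hi.le)) _ (zf_mem (hv1 (i+1) (Nat.succ_le_of_lt hi)))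
      have h2 : D ≤ c * dist (zf p (v i)) (zf p (v (i+1))) ^ α := le_trans (hv3 i hi) h1
      have h3 : D / c ≤ dist (zf p (v i)) (zf p (v (i+1))) ^ α := by
        rw [div_le_iff₀ hc]
        linarith
      calc ε = (D / c) ^ α⁻¹ := hεdef
        _ ≤ (dist (zf p (v i)) (zf p (v (i+1))) ^ α) ^ α⁻¹ :=
            Real.rpow_le_rpow (by positivity) h3 (by positivity)
        _ = dist (zf p (v i)) (zf p (v (i+1))) := by
            rw [← Real.rpow_mul dist_nonneg, mul_inv_cancel₀ hαne, Real.rpow_one]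
    -- points stay away from the origin
    have hstepc : ∀ i, i < K → v i ≤ V := by
      intro i hi
      have h0 : 1 < v i := hv1 i hi.le
      have h0' : 1 < v (i+1) := hv1 (i+1) (Nat.succ_le_of_lt hi)
      have h3 : dist (zf p (v i)) (zf p (v (i+1))) ≤ (v i) ^ (-p) + (v (i+1)) ^ (-p) := by
        rw [dist_eq_norm]
        refine (norm_sub_le _ _).trans ?_
        rw [abs_zf p (by linarith), abs_zf p (by linarith)]
      have h4 : (v (i+1)) ^ (-p) ≤ (v i) ^ (-p) := rpow_anti hp.le (by linarith) (hv2 i hi)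
      have h5 : ε / 2 ≤ (v i) ^ (-p) := by
        have := hstepb i hi
        linarith
      have h6 : ((v i) ^ (-p)) ^ (-p⁻¹) ≤ (ε / 2) ^ (-p⁻¹) :=
        rpow_anti (by positivity) (by positivity) h5
      have h7 : ((v i) ^ (-p)) ^ (-p⁻¹) = v i := by
        rw [← Real.rpow_mul (by linarith : (0:ℝ) ≤ v i), neg_mul_neg,
          mul_inv_cancel₀ (ne_of_gt hp), Real.rpow_one]
      have h8 : (ε / 2) ^ (-p⁻¹) = (2 / ε) ^ p⁻¹ := by
        rw [Real.rpow_neg (by positivity), ← Real.inv_rpow (by positivity), inv_div]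
      rw [h7, h8] at h6
      rw [hV]
      exact h6
    -- telescoping sum
    have hterm : ∀ i ∈ Finset.range (K - 1),
        ε ≤ ((v i) ^ (-p) - (v (i+1)) ^ (-p))
          + (1 - p')⁻¹ * ((v (i+1)) ^ (1 - p') - (v i) ^ (1 - p')) := by
      intro i hi
      rw [Finset.mem_range] at hi
      have hiK : i < K := by omega
      have hi1K : i + 1 ≤ K := Nat.succ_le_of_lt hiK
      have hvi : 1 < v i := hv1 i hiK.le
      have hvi1 : 1 < v (i+1) := hv1 (i+1) hi1K
      have hmono := hv2 i hiK
      have h1 := hstepb i hiK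
      have h2 := dist_zf_le hp.le (by linarith : (0:ℝ) < v i) hmono
      have hb1 : (v (i+1)) ^ (-p) ≤ (v (i+1)) ^ (-p') :=
        Real.rpow_le_rpow_of_exponent_le hvi1.le (by linarith)
      have h4 := bern (t := 1 - p') (by linarith) (by linarith) hvi.le hmono
      have h5 : (1 - p') - 1 = -p' := by ring
      rw [h5] at h4
      have h6 : (v (i+1)) ^ (-p') * (v (i+1) - v i)
          ≤ (1 - p')⁻¹ * ((v (i+1)) ^ (1 - p') - (v i) ^ (1 - p')) := by
        rw [le_inv_mul_iff₀ (by linarith : (0:ℝ) < 1 - p')]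
        calc (1 - p') * ((v (i+1)) ^ (-p') * (v (i+1) - v i)) = (1 - p') * ((v (i+1)) ^ (-p') * (v (i+1) - v i)) := rfl
          _ ≤ (v (i+1)) ^ (1 - p') - (v i) ^ (1 - p') := h4
      have h9 : (v (i+1)) ^ (-p) * (v (i+1) - v i) ≤ (v (i+1)) ^ (-p') * (v (i+1) - v i) :=
        mul_le_mul_of_nonneg_right hb1 (by linarith)
      linarith
    have hsum2 : ∑ i ∈ Finset.range (K - 1),
        (((v i) ^ (-p) - (v (i+1)) ^ (-p))
          + (1 - p')⁻¹ * ((v (i+1)) ^ (1 - p') - (v i) ^ (1 - p')))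
        = ((v 0) ^ (-p) - (v (K-1)) ^ (-p))
          + (1 - p')⁻¹ * ((v (K-1)) ^ (1 - p') - (v 0) ^ (1 - p')) := by
      rw [Finset.sum_add_distrib, Finset.sum_range_sub' (fun i => (v i) ^ (-p)),
        ← Finset.mul_sum, Finset.sum_range_sub (fun i => (v i) ^ (1 - p'))]
    have hK1lt : K - 1 < K := by omega
    have hvK1 : 1 < v (K-1) := hv1 (K-1) hK1lt.le
    have hr0 : (v 0) ^ (-p) ≤ 1 :=
      Real.rpow_le_one_of_one_le_of_nonpos (hv1 0 (by omega)).le (by linarith)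
    have hrK : (0:ℝ) ≤ (v (K-1)) ^ (-p) := (Real.rpow_pos_of_pos (by linarith) _).le
    have hgK : (v (K-1)) ^ (1 - p') ≤ V ^ (1 - p') :=
      Real.rpow_le_rpow (by linarith) (hstepc (K-1) hK1lt) (by linarith)
    have hg0 : (0:ℝ) ≤ (v 0) ^ (1 - p') :=
      (Real.rpow_pos_of_pos (by linarith [hv1 0 (Nat.zero_le K)]) _).le
    have hcard : ((K:ℝ) - 1) * ε = ∑ _i ∈ Finset.range (K - 1), ε := by
      rw [Finset.sum_const, Finset.card_range, nsmul_eq_mul, Nat.cast_sub hK, Nat.cast_one]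
    have hfin : ((K:ℝ) - 1) * ε ≤ 1 + (1 - p')⁻¹ * V ^ (1 - p') := by
      rw [hcard]
      calc ∑ _i ∈ Finset.range (K - 1), ε
          ≤ ∑ i ∈ Finset.range (K - 1),
            (((v i) ^ (-p) - (v (i+1)) ^ (-p))
              + (1 - p')⁻¹ * ((v (i+1)) ^ (1 - p') - (v i) ^ (1 - p'))) :=
            Finset.sum_le_sum hterm
        _ = ((v 0) ^ (-p) - (v (K-1)) ^ (-p))
              + (1 - p')⁻¹ * ((v (K-1)) ^ (1 - p') - (v 0) ^ (1 - p')) := hsum2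
        _ ≤ 1 + (1 - p')⁻¹ * V ^ (1 - p') := by
            have hinv : (0:ℝ) ≤ (1 - p')⁻¹ := by
              have : (0:ℝ) < 1 - p' := by linarith
              positivity
            have h10 := mul_le_mul_of_nonneg_left
              (by linarith : (v (K-1)) ^ (1 - p') - (v 0) ^ (1 - p') ≤ V ^ (1 - p')) hinv
            linarith
    exact hfin
  -- endgame
  have hA10 : (0:ℝ) < c ^ α⁻¹ := Real.rpow_pos_of_pos hc _
  set C0 : ℝ := max 1 ((1 - p')⁻¹ * (2 * c ^ α⁻¹) ^ w) with hC0def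
  have hC01 : (1:ℝ) ≤ C0 := le_max_left _ _
  have hC02 : (1 - p')⁻¹ * (2 * c ^ α⁻¹) ^ w ≤ C0 := le_max_right _ _
  have hC00 : (0:ℝ) < C0 := lt_of_lt_of_le one_pos hC01
  set C2 : ℝ := 2 * C0 * c ^ α⁻¹ * 6 ^ m with hC2def
  have hC20 : (0:ℝ) < C2 := by
    rw [hC2def]
    have h6m : (0:ℝ) < (6:ℝ) ^ m := Real.rpow_pos_of_pos (by norm_num) _
    positivity
  have htend : Filter.Tendsto (fun n : ℕ => (n:ℝ) ^ (1 - m)) Filter.atTop Filter.atTop :=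
    (tendsto_rpow_atTop (by linarith)).comp tendsto_natCast_atTop_atTop
  obtain ⟨K, hK1, hK2⟩ :=
    ((htend.eventually_gt_atTop (2 * C2)).and (Filter.eventually_ge_atTop 2)).exists
  have hKm := master K (by omega)
  set T : ℝ := 2 + Real.pi * (K:ℝ) with hT
  have hπpos := Real.pi_pos
  have hT0 : (0:ℝ) < T := by
    rw [hT]
    have : (0:ℝ) ≤ Real.pi * (K:ℝ) := by positivity
    linarith
  have hT1 : (1:ℝ) ≤ T := by
    rw [hT]
    have : (0:ℝ) ≤ Real.pi * (K:ℝ) := by positivity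
    linarith
  have hεeq : (T ^ (-q) / c) ^ α⁻¹ = T ^ (-u) / c ^ α⁻¹ := by
    rw [Real.div_rpow (Real.rpow_nonneg hT0.le _) hc.le, ← Real.rpow_mul hT0.le]
    have : -q * α⁻¹ = -u := by rw [hu]; ring
    rw [this]
  rw [hεeq] at hKm
  have hTu0 : (0:ℝ) < T ^ u := Real.rpow_pos_of_pos hT0 _
  have h2ε : 2 / (T ^ (-u) / c ^ α⁻¹) = 2 * c ^ α⁻¹ * T ^ u := by
    rw [Real.rpow_neg hT0.le]
    field_simp
  have hVeq : ((2 / (T ^ (-u) / c ^ α⁻¹)) ^ p⁻¹) ^ (1 - p')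
      = (2 * c ^ α⁻¹) ^ w * T ^ (u * w) := by
    rw [h2ε, ← Real.rpow_mul (by positivity)]
    rw [show p⁻¹ * (1 - p') = w from by rw [hw]; ring]
    rw [Real.mul_rpow (by positivity) (Real.rpow_nonneg hT0.le _), ← Real.rpow_mul hT0.le]
  rw [hVeq] at hKm
  have hTuw1 : (1:ℝ) ≤ T ^ (u * w) := by
    have := Real.rpow_le_rpow (by norm_num : (0:ℝ) ≤ 1) hT1 (by positivity : (0:ℝ) ≤ u * w)
    rwa [Real.one_rpow] at this
  have hTuw0 : (0:ℝ) ≤ T ^ (u * w) := by linarith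
  have hrhs : 1 + (1 - p')⁻¹ * ((2 * c ^ α⁻¹) ^ w * T ^ (u * w)) ≤ 2 * C0 * T ^ (u * w) := by
    have ha : (1:ℝ) ≤ C0 * T ^ (u * w) := by
      have h0 := mul_le_mul hC01 hTuw1 zero_le_one hC00.le
      linarith [h0]
    have hb : (1 - p')⁻¹ * ((2 * c ^ α⁻¹) ^ w * T ^ (u * w)) ≤ C0 * T ^ (u * w) := by
      rw [← mul_assoc]
      exact mul_le_mul_of_nonneg_right hC02 hTuw0
    linarith
  have hmain : (K:ℝ) - 1 ≤ 2 * C0 * c ^ α⁻¹ * T ^ m := by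
    have h1 := mul_le_mul_of_nonneg_right (le_trans hKm hrhs)
      (by positivity : (0:ℝ) ≤ c ^ α⁻¹ * T ^ u)
    have h2 : ((K:ℝ) - 1) * (T ^ (-u) / c ^ α⁻¹) * (c ^ α⁻¹ * T ^ u) = (K:ℝ) - 1 := by
      rw [Real.rpow_neg hT0.le]
      field_simp
    have h3 : (2 * C0 * T ^ (u * w)) * (c ^ α⁻¹ * T ^ u) = 2 * C0 * c ^ α⁻¹ * T ^ m := by
      rw [show (2 * C0 * T ^ (u * w)) * (c ^ α⁻¹ * T ^ u)
          = 2 * C0 * c ^ α⁻¹ * (T ^ (u * w) * T ^ u) from by ring,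
        ← Real.rpow_add hT0, hmw]
    rw [h2, h3] at h1
    exact h1
  have hK2' : (2:ℝ) ≤ (K:ℝ) := by exact_mod_cast hK2
  have hKpos : (0:ℝ) < (K:ℝ) := by linarith
  have hT6 : T ≤ 6 * (K:ℝ) := by
    rw [hT]
    have hπ4 := mul_le_mul_of_nonneg_right Real.pi_le_four (by positivity : (0:ℝ) ≤ (K:ℝ))
    linarith
  have hTm : T ^ m ≤ 6 ^ m * (K:ℝ) ^ m := by
    calc T ^ m ≤ (6 * (K:ℝ)) ^ m := Real.rpow_le_rpow hT0.le hT6 hm0.le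
      _ = 6 ^ m * (K:ℝ) ^ m := Real.mul_rpow (by norm_num) (by positivity)
  have hKm0 : (0:ℝ) < (K:ℝ) ^ m := Real.rpow_pos_of_pos hKpos _
  have hfin2 : (K:ℝ) ≤ 2 * C2 * (K:ℝ) ^ m := by
    have h1 : (K:ℝ) - 1 ≤ 2 * C0 * c ^ α⁻¹ * (6 ^ m * (K:ℝ) ^ m) :=
      hmain.trans (mul_le_mul_of_nonneg_left hTm (by positivity))
    have h3 : 2 * C0 * c ^ α⁻¹ * (6 ^ m * (K:ℝ) ^ m) = C2 * (K:ℝ) ^ m := by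
      rw [hC2def]
      ring
    rw [h3] at h1
    linarith
  have hend : (K:ℝ) ^ (1 - m) ≤ 2 * C2 := by
    have h1 : (K:ℝ) ^ (1 - m) = (K:ℝ) / (K:ℝ) ^ m := by
      rw [Real.rpow_sub hKpos, Real.rpow_one]
    rw [h1, div_le_iff₀ hKm0]
    linarith [hfin2]
  linarith [hK1]
end

section
/- Let 0 < p ≤ q. For every integer k ≥ 1, the 1-dimensional Hausdorff measure of the k-th full turn satisfies (2πk)^{-p} ≤ H¹(S_{p,q}^k) ≤ 8(2πk)^{-p}. -/
open Set Metric MeasureTheory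
open scoped ENNReal NNReal

/-- The `k`-th full turn of the elliptical polynomial spiral `S_{p,q}`. -/
noncomputable def spiralTurn (p q : ℝ) (k : ℕ) : Set ℂ :=
  {z : ℂ | ∃ t : ℝ, 2 * Real.pi * k ≤ t ∧ t < 2 * Real.pi * (k + 1) ∧
    z = (t ^ (-p) * Real.cos t : ℝ) + (t ^ (-q) * Real.sin t : ℝ) * Complex.I}

namespace SpiralAux

set_option maxHeartbeats 2000000



noncomputable def sp (p q : ℝ) (t : ℝ) : ℂ :=
  ((t ^ (-p) * Real.cos t : ℝ) : ℂ) + ((t ^ (-q) * Real.sin t : ℝ) : ℂ) * Complex.I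

noncomputable def sp' (p q : ℝ) (t : ℝ) : ℂ :=
  (((-p) * t ^ (-p - 1) * Real.cos t - t ^ (-p) * Real.sin t : ℝ) : ℂ)
    + (((-q) * t ^ (-q - 1) * Real.sin t + t ^ (-q) * Real.cos t : ℝ) : ℂ) * Complex.I

lemma spiralTurn_eq (p q : ℝ) (k : ℕ) :
    spiralTurn p q k = sp p q '' Ico (2 * Real.pi * k) (2 * Real.pi * (k + 1)) := by
  ext z
  constructor
  · rintro ⟨t, h1, h2, h3⟩; exact ⟨t, ⟨h1, h2⟩, h3.symm⟩
  · rintro ⟨t, ⟨h1, h2⟩, h3⟩; exact ⟨t, h1, h2, h3.symm⟩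

lemma sp_hasDerivAt (p q : ℝ) {t : ℝ} (ht : 0 < t) :
    HasDerivAt (sp p q) (sp' p q t) t := by
  have hx : HasDerivAt (fun t : ℝ => t ^ (-p) * Real.cos t)
      ((-p) * t ^ (-p - 1) * Real.cos t - t ^ (-p) * Real.sin t) t := by
    have : HasDerivAt (fun t : ℝ => t ^ (-p) * Real.cos t) _ t :=
      (Real.hasDerivAt_rpow_const (p := -p) (Or.inl ht.ne')).mul (Real.hasDerivAt_cos t)
    convert this using 1; ring
  have hy : HasDerivAt (fun t : ℝ => t ^ (-q) * Real.sin t)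
      ((-q) * t ^ (-q - 1) * Real.sin t + t ^ (-q) * Real.cos t) t := by
    exact (Real.hasDerivAt_rpow_const (p := -q) (Or.inl ht.ne')).mul (Real.hasDerivAt_sin t)
  exact hx.ofReal_comp.add (hy.ofReal_comp.mul_const Complex.I)

-- numeric facts
lemma pi_lb : (3.141592 : ℝ) < Real.pi := Real.pi_gt_d6
lemma pi_ub : Real.pi < 3.141593 := Real.pi_lt_d6

lemma exp_le_t {t : ℝ} (ht : 2 * Real.pi ≤ t) : Real.exp 1 ≤ t := by
  have := Real.exp_one_lt_d9
  nlinarith [pi_lb]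

lemma one_le_log {t : ℝ} (ht : 2 * Real.pi ≤ t) : 1 ≤ Real.log t := by
  have h0 : (0:ℝ) < t := by nlinarith [pi_lb]
  rw [Real.le_log_iff_exp_le h0]
  exact exp_le_t ht

-- u * exp (-u) ≤ 1/e ≤ 0.37
lemma mul_exp_neg_le {u : ℝ} (hu : 0 ≤ u) : u * Real.exp (-u) ≤ 0.37 := by
  have h1 : u ≤ Real.exp (u - 1) := by
    have := Real.add_one_le_exp (u - 1); linarith
  have h2 : Real.exp (u - 1) * Real.exp (-u) = Real.exp (-1) := by
    rw [← Real.exp_add]; ring_nf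
  have h3 : u * Real.exp (-u) ≤ Real.exp (-1) := by
    calc u * Real.exp (-u) ≤ Real.exp (u-1) * Real.exp (-u) :=
          mul_le_mul_of_nonneg_right h1 (Real.exp_pos _).le
    _ = Real.exp (-1) := h2
  have h4 : Real.exp (-1) ≤ 0.37 := by
    rw [Real.exp_neg]
    rw [inv_le_comm₀ (Real.exp_pos _) (by norm_num)]
    have := Real.exp_one_gt_d9
    linarith
  linarith

lemma q_term_le {p q t : ℝ} (hp : 0 < p) (hpq : p ≤ q) (ht : 2 * Real.pi ≤ t) :
    q * t ^ (-q - 1) ≤ (p + 0.37) * t ^ (-p - 1) := by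
  have ht0 : (0:ℝ) < t := by nlinarith [pi_lb]
  have ht1 : (1:ℝ) ≤ t := by nlinarith [pi_lb]
  have hlog : 1 ≤ Real.log t := one_le_log ht
  set r := q - p with hr
  have hr0 : 0 ≤ r := by simp [hr]; linarith
  have hsplit : t ^ (-q - 1) = t ^ (-r) * t ^ (-p - 1) := by
    rw [← Real.rpow_add ht0, hr]; ring_nf
  have htr : t ^ (-r) = Real.exp (-(r * Real.log t)) := by
    rw [Real.rpow_def_of_pos ht0]; ring_nf
  have htr1 : t ^ (-r) ≤ 1 :=
    Real.rpow_le_one_of_one_le_of_nonpos ht1 (by linarith)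
  have hre : r * t ^ (-r) ≤ 0.37 := by
    rw [htr]
    have hu : 0 ≤ r * Real.log t := mul_nonneg hr0 (by linarith)
    have := mul_exp_neg_le hu
    have hmono : r * Real.exp (-(r * Real.log t)) ≤ r * Real.log t * Real.exp (-(r * Real.log t)) := by
      have : r ≤ r * Real.log t := le_mul_of_one_le_right hr0 hlog
      exact mul_le_mul_of_nonneg_right this (Real.exp_pos _).le
    exact hmono.trans this
  have hq : q * t ^ (-r) ≤ p + 0.37 := by
    have : q * t ^ (-r) = p * t ^ (-r) + r * t ^ (-r) := by rw [hr]; ring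
    rw [this]
    have : p * t ^ (-r) ≤ p := by
      nlinarith [Real.rpow_nonneg ht0.le (-r)]
    linarith
  rw [hsplit, ← mul_assoc]
  exact mul_le_mul_of_nonneg_right hq (Real.rpow_nonneg ht0.le _)

lemma exp_neg_one_lb : (0.36787944 : ℝ) ≤ Real.exp (-1) := by
  have h1 : Real.exp (-1) * Real.exp 1 = 1 := by rw [← Real.exp_add]; norm_num
  nlinarith [Real.exp_one_lt_d9, Real.exp_pos (-1 : ℝ), Real.exp_pos (1:ℝ)]

lemma exp_neg_half_lb : (0.60653065 : ℝ) ≤ Real.exp (-(1/2) : ℝ) := by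
  have h1 : Real.exp (-(1/2) : ℝ) * Real.exp (-(1/2) : ℝ) = Real.exp (-1) := by
    rw [← Real.exp_add]; norm_num
  nlinarith [exp_neg_one_lb, Real.exp_pos (-(1/2) : ℝ)]

lemma exp_neg_threehalf_lb : (0.2231301 : ℝ) ≤ Real.exp (-(3/2) : ℝ) := by
  have h1 : Real.exp (-1 : ℝ) * Real.exp (-(1/2) : ℝ) = Real.exp (-(3/2) : ℝ) := by
    rw [← Real.exp_add]; norm_num
  nlinarith [exp_neg_one_lb, exp_neg_half_lb, Real.exp_pos (-1 : ℝ), Real.exp_pos (-(1/2):ℝ)]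

/-- tangent line bound: `exp (-x) ≥ exp (-x₀) * (1 - (x - x₀))`. -/
lemma exp_tangent (x x0 : ℝ) : Real.exp (-x0) * (1 - (x - x0)) ≤ Real.exp (-x) := by
  have h := Real.add_one_le_exp (x0 - x)
  have h2 : Real.exp (-x0) * Real.exp (x0 - x) = Real.exp (-x) := by
    rw [← Real.exp_add]; ring_nf
  nlinarith [Real.exp_pos (-x0 : ℝ)]

lemma lemA {w : ℝ} (hw : 0 < w) (hw4 : w ≤ 4) :
    (1 + (w + 0.185)/Real.pi) * ((2*Real.pi/48) *
      ((1 + 96/w) * (1 - Real.exp (-(w/2))))) ≤ 8 := by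
  have hπ := pi_lb
  have hπ' := pi_ub
  have hE : 0 < Real.exp (-(w/2)) := Real.exp_pos _
  have hE1 : Real.exp (-(w/2)) ≤ 1 := Real.exp_le_one_iff.2 (by linarith)
  -- choose linear upper bound m on (1 - E) by cases
  obtain ⟨m, hm, hkey⟩ : ∃ m : ℝ, 1 - Real.exp (-(w/2)) ≤ m ∧
      (Real.pi + w + 0.185) * ((w + 96) * m) ≤ 192 * w := by
    rcases le_or_gt w (1/2) with h | h
    · refine ⟨w/2, ?_, ?_⟩
      · nlinarith [Real.add_one_le_exp (-(w/2))]
      · have hb : (Real.pi + w + 0.185) * (w + 96) ≤ 384 := by nlinarith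
        nlinarith [mul_le_mul_of_nonneg_left hb (by positivity : (0:ℝ) ≤ w/2)]
    rcases le_or_gt w (3/2) with h' | h'
    · refine ⟨0.0902041 + 0.30326533 * w, ?_, ?_⟩
      · have ht := exp_tangent (w/2) (1/2)
        nlinarith [exp_neg_half_lb]
      · nlinarith [mul_nonneg (mul_nonneg (by linarith : (0:ℝ) ≤ w - (1/2)) (by linarith : (0:ℝ) ≤ (3/2) - w)) (by linarith : (0:ℝ) ≤ w + 96), mul_nonneg (by linarith : (0:ℝ) ≤ w - (1/2)) (by linarith : (0:ℝ) ≤ (3/2) - w), sq_nonneg (w - (1/2)), sq_nonneg ((3/2) - w)]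
    rcases le_or_gt w (5/2) with h'' | h''
    · refine ⟨0.26424112 + 0.18393972 * w, ?_, ?_⟩
      · have ht := exp_tangent (w/2) 1
        have : Real.exp (-(1:ℝ)) = Real.exp (-1 : ℝ) := rfl
        nlinarith [exp_neg_one_lb, exp_tangent (w/2) 1]
      · nlinarith [mul_nonneg (mul_nonneg (by linarith : (0:ℝ) ≤ w - (3/2)) (by linarith : (0:ℝ) ≤ (5/2) - w)) (by linarith : (0:ℝ) ≤ w + 96), mul_nonneg (by linarith : (0:ℝ) ≤ w - (3/2)) (by linarith : (0:ℝ) ≤ (5/2) - w), sq_nonneg (w - (3/2)), sq_nonneg ((5/2) - w)]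
    · refine ⟨0.44217475 + 0.11156505 * w, ?_, ?_⟩
      · nlinarith [exp_neg_threehalf_lb, exp_tangent (w/2) (3/2)]
      · nlinarith [mul_nonneg (mul_nonneg (by linarith : (0:ℝ) ≤ w - (5/2)) (by linarith : (0:ℝ) ≤ 4 - w)) (by linarith : (0:ℝ) ≤ w + 96), mul_nonneg (by linarith : (0:ℝ) ≤ w - (5/2)) (by linarith : (0:ℝ) ≤ 4 - w), sq_nonneg (w - (5/2)), sq_nonneg (4 - w)]
  have hm0 : 0 ≤ m := le_trans (by nlinarith) hm
  have hstep : (1 + (w + 0.185)/Real.pi) * ((2*Real.pi/48) *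
      ((1 + 96/w) * (1 - Real.exp (-(w/2)))))
      ≤ (1 + (w + 0.185)/Real.pi) * ((2*Real.pi/48) * ((1 + 96/w) * m)) := by
    have h96 : (0:ℝ) ≤ 1 + 96/w := by positivity
    apply mul_le_mul_of_nonneg_left _ (by positivity)
    apply mul_le_mul_of_nonneg_left _ (by positivity)
    exact mul_le_mul_of_nonneg_left hm h96
  refine le_trans hstep ?_
  have heq : (1 + (w + 0.185)/Real.pi) * ((2*Real.pi/48) * ((1 + 96/w) * m))
      = ((Real.pi + w + 0.185) * ((w + 96) * m)) / (24 * w) := by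
    field_simp
    ring
  rw [heq, div_le_iff₀ (by positivity)]
  nlinarith

lemma lemB {w : ℝ} (hw : 4 ≤ w) :
    (1 + (w + 0.185)/Real.pi) * (2*Real.pi/(50*w) + 4*Real.pi/w) ≤ 8 := by
  have hπ := pi_lb
  have hπ' := pi_ub
  have heq : (1 + (w + 0.185)/Real.pi) * (2*Real.pi/(50*w) + 4*Real.pi/w)
      = (Real.pi + w + 0.185) * 202 / (50 * w) := by
    field_simp
    ring
  rw [heq, div_le_iff₀ (by positivity)]
  nlinarith
lemma norm_sp'_le {p q t : ℝ} (hp : 0 < p) (hpq : p ≤ q) (ht : 2 * Real.pi ≤ t) :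
    ‖sp' p q t‖ ≤ t ^ (-p) * (1 + (2 * p + 0.37) / t) := by
  have ht0 : (0:ℝ) < t := by nlinarith [pi_lb]
  have ht1 : (1:ℝ) ≤ t := by nlinarith [pi_lb]
  have hqp : t ^ (-q) ≤ t ^ (-p) := Real.rpow_le_rpow_of_exponent_le ht1 (by linarith)
  have hqp1 : t ^ (-q-1) ≤ t ^ (-p-1) := Real.rpow_le_rpow_of_exponent_le ht1 (by linarith)
  have hpn : (0:ℝ) ≤ t ^ (-p) := Real.rpow_nonneg ht0.le _
  have hqn : (0:ℝ) ≤ t ^ (-q) := Real.rpow_nonneg ht0.le _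
  have hpn1 : (0:ℝ) ≤ t ^ (-p-1) := Real.rpow_nonneg ht0.le _
  have hqn1 : (0:ℝ) ≤ t ^ (-q-1) := Real.rpow_nonneg ht0.le _
  -- split sp' = A + B
  have hsplit : sp' p q t =
      (((-(t ^ (-p) * Real.sin t) : ℝ) : ℂ) + ((t ^ (-q) * Real.cos t : ℝ) : ℂ) * Complex.I)
      + ((((-p) * t ^ (-p - 1) * Real.cos t : ℝ) : ℂ)
          + (((-q) * t ^ (-q - 1) * Real.sin t : ℝ) : ℂ) * Complex.I) := by
    unfold sp'; push_cast; ring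
  have hA : ‖(((-(t ^ (-p) * Real.sin t) : ℝ) : ℂ) + ((t ^ (-q) * Real.cos t : ℝ) : ℂ) * Complex.I)‖
      ≤ t ^ (-p) := by
    rw [Complex.norm_add_mul_I]
    refine le_trans (Real.sqrt_le_sqrt ?_) (le_of_eq (Real.sqrt_sq hpn))
    nlinarith [Real.sin_sq_add_cos_sq t, sq_nonneg (Real.cos t), sq_nonneg (Real.sin t),
      mul_le_mul hqp hqp hqn hpn]
  have hB : ‖((((-p) * t ^ (-p - 1) * Real.cos t : ℝ) : ℂ)
          + (((-q) * t ^ (-q - 1) * Real.sin t : ℝ) : ℂ) * Complex.I)‖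
      ≤ p * t ^ (-p-1) + q * t ^ (-q-1) := by
    rw [Complex.norm_add_mul_I]
    have hnn : (0:ℝ) ≤ p * t ^ (-p-1) + q * t ^ (-q-1) :=
      add_nonneg (mul_nonneg hp.le hpn1) (mul_nonneg (hp.trans_le hpq).le hqn1)
    refine le_trans (Real.sqrt_le_sqrt ?_) (le_of_eq (Real.sqrt_sq hnn))
    nlinarith [Real.sin_sq_le_one t, Real.cos_sq_le_one t,
      mul_nonneg (mul_nonneg hp.le hpn1) (mul_nonneg (hp.trans_le hpq).le hqn1),
      sq_nonneg (p * t ^ (-p-1)), sq_nonneg (q * t ^ (-q-1)),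
      sq_nonneg (Real.sin t), sq_nonneg (Real.cos t)]
  have hcomb : ‖sp' p q t‖ ≤ t ^ (-p) + (p * t ^ (-p-1) + q * t ^ (-q-1)) := by
    rw [hsplit]
    exact (norm_add_le _ _).trans (add_le_add hA hB)
  have hq' := q_term_le hp hpq ht
  have hrw : t ^ (-p-1) = t ^ (-p) / t := by
    rw [show -p-1 = -p + (-1) from by ring, Real.rpow_add ht0, Real.rpow_neg_one]
    ring
  have : t ^ (-p) * (1 + (2*p+0.37)/t) = t ^ (-p) + (2*p+0.37) * t ^ (-p-1) := by
    rw [hrw]; field_simp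
  rw [this]
  nlinarith [hcomb, hq']

lemma turn_measure_le (p q : ℝ) (hp : 0 < p) (hpq : p ≤ q) (k N : ℕ) (hk : 1 ≤ k)
    (hN : 1 ≤ N) :
    μH[1] (spiralTurn p q k) ≤ ENNReal.ofReal
      ((1 + (2*p+0.37)/(2*Real.pi*k)) * (2*Real.pi*k) ^ (-p) *
        ((2*Real.pi/N) * ∑ i ∈ Finset.range N, Real.exp (-(p/(2*k*N)))^i)) := by
  have hπ := pi_lb
  set a : ℝ := 2*Real.pi*k with ha_def
  set Δ : ℝ := 2*Real.pi/N with hΔ_def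
  have hk1 : (1:ℝ) ≤ (k:ℝ) := by exact_mod_cast hk
  have hN1 : (1:ℝ) ≤ (N:ℝ) := by exact_mod_cast hN
  have ha2π : 2*Real.pi ≤ a := by
    rw [ha_def]; nlinarith
  have ha : (0:ℝ) < a := by nlinarith
  have hΔ : (0:ℝ) < Δ := by rw [hΔ_def]; positivity
  have hNΔ : (N:ℝ) * Δ = 2*Real.pi := by rw [hΔ_def]; field_simp
  set c : ℝ := 2*p + 0.37 with hc_def
  have hc : (0:ℝ) < c := by rw [hc_def]; linarith
  set σ : ℝ := Real.exp (-(p/(2*k*N))) with hσ_def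
  have hσpos : 0 < σ := Real.exp_pos _
  set C : ℝ := (1 + c/a) * a ^ (-p) with hC_def
  have hapn : (0:ℝ) < a ^ (-p) := Real.rpow_pos_of_pos ha _
  have hCpos : 0 < C := by
    rw [hC_def]; positivity
  -- the pieces
  set T : ℕ → Set ℝ := fun i => Icc (a + i*Δ) (a + i*Δ + Δ) with hT_def
  -- cover
  have hcover : Ico a (2*Real.pi*((k:ℝ)+1)) ⊆ ⋃ i ∈ Finset.range N, T i := by
    intro t ht
    obtain ⟨ht1, ht2⟩ := ht
    have htb : t - a < 2*Real.pi := by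
      have : 2*Real.pi*((k:ℝ)+1) = a + 2*Real.pi := by rw [ha_def]; ring
      rw [this] at ht2; linarith
    have hnn : 0 ≤ (t - a)/Δ := div_nonneg (by linarith) hΔ.le
    set i : ℕ := ⌊(t - a)/Δ⌋₊ with hi_def
    have hiN : i < N := by
      rw [hi_def]
      apply Nat.floor_lt hnn |>.2
      rw [div_lt_iff₀ hΔ]
      nlinarith
    have hfl : (i:ℝ) ≤ (t - a)/Δ := Nat.floor_le hnn
    have hfl2 : (t - a)/Δ < (i:ℝ) + 1 := Nat.lt_floor_add_one _
    simp only [Set.mem_iUnion]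
    refine ⟨i, Finset.mem_range.2 hiN, ?_⟩
    rw [hT_def]
    constructor
    · have := (le_div_iff₀ hΔ).1 hfl
      nlinarith
    · have := (div_lt_iff₀ hΔ).1 hfl2
      nlinarith
  -- Lipschitz on each piece
  have hlip : ∀ i : ℕ, i < N → LipschitzOnWith (Real.toNNReal (C * σ^i)) (sp p q) (T i) := by
    intro i hiN
    have hiN' : (i:ℝ) ≤ (N:ℝ) - 1 := by
      have : (i:ℝ) + 1 ≤ (N:ℝ) := by exact_mod_cast hiN
      linarith
    have hti : 2*Real.pi ≤ a + i*Δ := by nlinarith [mul_nonneg (Nat.cast_nonneg i) hΔ.le]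
    have hti0 : (0:ℝ) < a + i*Δ := by nlinarith
    apply Convex.lipschitzOnWith_of_nnnorm_hasDerivWithin_le (f' := sp' p q) (convex_Icc _ _)
    · intro t ht'
      exact (sp_hasDerivAt p q (lt_of_lt_of_le hti0 ht'.1)).hasDerivWithinAt
    · intro t ht'
      obtain ⟨htl, htr⟩ := ht'
      have ht2π : 2*Real.pi ≤ t := le_trans hti htl
      have ht0 : (0:ℝ) < t := by nlinarith
      rw [← Real.toNNReal_coe (r := ‖sp' p q t‖₊)]
      rw [Real.toNNReal_le_toNNReal_iff (by positivity)]
      rw [coe_nnnorm]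
      refine le_trans (norm_sp'_le hp hpq ht2π) ?_
      -- t^(-p) * (1 + c/t) ≤ C * σ^i
      have h1 : 1 + c/t ≤ 1 + c/a := by
        have : c/t ≤ c/a := by
          apply div_le_div_of_nonneg_left hc.le ha (le_trans (by nlinarith [mul_nonneg (Nat.cast_nonneg i) hΔ.le]) htl)
        linarith
      have h2 : t ^ (-p) ≤ (a + i*Δ) ^ (-p) :=
        Real.rpow_le_rpow_of_nonpos hti0 htl (by linarith)
      have h3 : (a + i*Δ) ^ (-p) ≤ a ^ (-p) * σ^i := by
        have hiΔa : (i:ℝ)*Δ ≤ a := by nlinarith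
        have hlog : Real.log a + (i:ℝ)/(2*k*N) ≤ Real.log (a + i*Δ) := by
          have hquot : Real.log (a + i*Δ) - Real.log a = Real.log ((a+i*Δ)/a) := by
            rw [Real.log_div hti0.ne' ha.ne']
          have hlb : 1 - ((a+i*Δ)/a)⁻¹ ≤ Real.log ((a+i*Δ)/a) :=
            Real.one_sub_inv_le_log_of_pos (by positivity)
          have hinv : 1 - ((a+i*Δ)/a)⁻¹ = (i*Δ)/(a+i*Δ) := by
            field_simp; ring
          have hfin : (i:ℝ)/(2*k*N) ≤ (i*Δ)/(a+i*Δ) := by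
            have hΔa : Δ * (2*(k:ℝ)*N) = 2 * a := by
              rw [hΔ_def, ha_def]; field_simp
            rw [div_le_div_iff₀ (by positivity) (by nlinarith)]
            nlinarith [mul_nonneg (Nat.cast_nonneg i) hΔ.le]
          linarith [hquot ▸ hlb, hinv ▸ hlb]
        have hL : (a + i*Δ) ^ (-p) = Real.exp (-p * Real.log (a+i*Δ)) := by
          rw [Real.rpow_def_of_pos hti0]; ring_nf
        have hR : a ^ (-p) * σ^i = Real.exp (-p * (Real.log a + (i:ℝ)/(2*k*N))) := by
          rw [Real.rpow_def_of_pos ha, hσ_def, ← Real.exp_nat_mul, ← Real.exp_add]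
          congr 1; field_simp; ring
        rw [hL, hR]
        apply Real.exp_le_exp.2
        nlinarith
      calc t ^ (-p) * (1 + c/t) ≤ (a ^ (-p) * σ^i) * (1 + c/a) := by
            apply mul_le_mul (le_trans h2 h3) h1 (by positivity) (by positivity)
        _ = C * σ^i := by rw [hC_def]; ring
  -- measure bound
  rw [spiralTurn_eq]
  have step1 : μH[1] (sp p q '' Ico a (2*Real.pi*((k:ℝ)+1)))
      ≤ ∑ i ∈ Finset.range N, μH[1] (sp p q '' T i) := by
    refine le_trans (measure_mono ?_) (measure_biUnion_finset_le _ _)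
    refine le_trans (Set.image_mono hcover) ?_
    rw [Set.image_iUnion₂]
  have step2 : ∀ i ∈ Finset.range N, μH[1] (sp p q '' T i) ≤ ENNReal.ofReal (C * σ^i * Δ) := by
    intro i hi
    have hiN := Finset.mem_range.1 hi
    have h := (hlip i hiN).hausdorffMeasure_image_le (d := 1) (by norm_num)
    refine le_trans h ?_
    have hμT : μH[1] (T i) = ENNReal.ofReal Δ := by
      rw [hT_def]
      simp only [MeasureTheory.hausdorffMeasure_real]
      rw [Real.volume_Icc]
      congr 1; ring
    rw [hμT, ENNReal.rpow_one]
    rw [show ((Real.toNNReal (C * σ^i) : ℝ≥0) : ℝ≥0∞) = ENNReal.ofReal (C * σ^i) from rfl]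
    rw [← ENNReal.ofReal_mul (by positivity)]
  have step3 : ∑ i ∈ Finset.range N, μH[1] (sp p q '' T i)
      ≤ ENNReal.ofReal (∑ i ∈ Finset.range N, C * σ^i * Δ) := by
    rw [ENNReal.ofReal_sum_of_nonneg (fun i _ => by positivity)]
    exact Finset.sum_le_sum step2
  refine le_trans step1 (le_trans step3 ?_)
  apply ENNReal.ofReal_le_ofReal
  rw [Finset.sum_congr rfl (fun i _ => show C * σ^i * Δ = (C*Δ) * σ^i from by ring)]
  rw [← Finset.mul_sum]
  rw [hC_def]
  apply le_of_eq; ring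
lemma lipschitz_re : LipschitzWith 1 Complex.re := by
  apply LipschitzWith.of_dist_le_mul
  intro x y
  simpa [Real.dist_eq, Complex.dist_eq, ← Complex.sub_re] using Complex.abs_re_le_norm (x - y)

lemma turn_measure_ge (p q : ℝ) (hp : 0 < p) (k : ℕ) (hk : 1 ≤ k) :
    ENNReal.ofReal ((2*Real.pi*(k:ℝ)) ^ (-p)) ≤ μH[1] (spiralTurn p q k) := by
  have hπ := pi_lb
  have hk1 : (1:ℝ) ≤ (k:ℝ) := by exact_mod_cast hk
  set a : ℝ := 2*Real.pi*(k:ℝ) with ha_def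
  have ha : (0:ℝ) < a := by rw [ha_def]; nlinarith
  have hb : (0:ℝ) < a + Real.pi := by nlinarith
  set g : ℝ → ℝ := fun t => t ^ (-p) * Real.cos t with hg_def
  have hga : g a = a ^ (-p) := by
    rw [hg_def]
    simp only
    rw [ha_def, show 2*Real.pi*(k:ℝ) = (k:ℝ)*(2*Real.pi) from by ring]
    rw [Real.cos_nat_mul_two_pi k, mul_one]
  have hgb : g (a + Real.pi) = -((a+Real.pi) ^ (-p)) := by
    rw [hg_def]
    simp only
    rw [ha_def, show 2*Real.pi*(k:ℝ) + Real.pi = (k:ℝ)*(2*Real.pi) + Real.pi from by ring]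
    rw [Real.cos_nat_mul_two_pi_add_pi k]
    ring
  have hcont : ContinuousOn g (Icc a (a + Real.pi)) := by
    apply ContinuousOn.mul
    · intro t ht'
      have : (0:ℝ) < t := lt_of_lt_of_le ha ht'.1
      exact (Real.continuousAt_rpow_const t (-p) (Or.inl this.ne')).continuousWithinAt
    · exact Real.continuous_cos.continuousOn
  have hIVT : Icc (g (a+Real.pi)) (g a) ⊆ g '' Icc a (a+Real.pi) :=
    intermediate_value_Icc' (by linarith [Real.pi_pos]) hcont
  have hsub : g '' Icc a (a+Real.pi) ⊆ Complex.re '' spiralTurn p q k := by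
    rintro x ⟨t, ht, rfl⟩
    refine ⟨(t ^ (-p) * Real.cos t : ℝ) + (t ^ (-q) * Real.sin t : ℝ) * Complex.I, ⟨t, ?_, ?_, rfl⟩, ?_⟩
    · exact ht.1
    · push_cast; nlinarith [ht.2]
    · simp only [hg_def, Complex.add_re, Complex.mul_re, Complex.ofReal_re, Complex.ofReal_im,
        Complex.I_re, Complex.I_im]
      ring
  have hicc : ENNReal.ofReal (a ^ (-p)) ≤ μH[1] (Icc (g (a+Real.pi)) (g a)) := by
    rw [MeasureTheory.hausdorffMeasure_real, Real.volume_Icc]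
    apply ENNReal.ofReal_le_ofReal
    rw [hga, hgb]
    nlinarith [Real.rpow_nonneg hb.le (-p)]
  refine le_trans hicc (le_trans (measure_mono (hIVT.trans hsub)) ?_)
  have := lipschitz_re.hausdorffMeasure_image_le (d := 1) (by norm_num) (spiralTurn p q k)
  simpa using this
-- upper bound, assembled
lemma turn_upper (p q : ℝ) (hp : 0 < p) (hpq : p ≤ q) (k : ℕ) (hk : 1 ≤ k) :
    μH[1] (spiralTurn p q k) ≤ ENNReal.ofReal (8 * (2 * Real.pi * k) ^ (-p)) := by
  have hπ := pi_lb
  have hk1 : (1:ℝ) ≤ (k:ℝ) := by exact_mod_cast hk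
  have hk0 : (0:ℝ) < (k:ℝ) := by linarith
  set w : ℝ := p / k with hw_def
  have hw : 0 < w := div_pos hp hk0
  have hwp : w ≤ p := by
    rw [hw_def, div_le_iff₀ hk0]; nlinarith
  set a : ℝ := 2*Real.pi*(k:ℝ) with ha_def
  have ha : 0 < a := by rw [ha_def]; nlinarith
  have hapn : (0:ℝ) < a ^ (-p) := Real.rpow_pos_of_pos ha _
  have hCle : 1 + (2*p+0.37)/(2*Real.pi*k) ≤ 1 + (w + 0.185)/Real.pi := by
    have : (2*p+0.37)/(2*Real.pi*k) ≤ (w + 0.185)/Real.pi := by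
      rw [div_le_div_iff₀ (by nlinarith) (by nlinarith)]
      have hpw : 2*p = 2*w*k := by rw [hw_def]; field_simp
      nlinarith
    linarith
  have hC0 : (0:ℝ) ≤ 1 + (2*p+0.37)/(2*Real.pi*k) := by positivity
  -- generic: given N and a bound on (2π/N)·S, conclude
  have main : ∀ N : ℕ, 1 ≤ N →
      ((2*Real.pi/N) * ∑ i ∈ Finset.range N, Real.exp (-(p/(2*k*N)))^i)
        * (1 + (w + 0.185)/Real.pi) ≤ 8 →
      μH[1] (spiralTurn p q k) ≤ ENNReal.ofReal (8 * (2 * Real.pi * k) ^ (-p)) := by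
    intro N hN hbound
    refine le_trans (turn_measure_le p q hp hpq k N hk hN) (ENNReal.ofReal_le_ofReal ?_)
    have hF0 : (0:ℝ) < 1 + (w + 0.185)/Real.pi := by positivity
    have hS0 : (0:ℝ) ≤ (2*Real.pi/N) * ∑ i ∈ Finset.range N, Real.exp (-(p/(2*k*N)))^i := by
      apply mul_nonneg (by positivity)
      apply Finset.sum_nonneg
      intro i _
      positivity
    have h1 : (1 + (2*p+0.37)/(2*Real.pi*k)) *
        ((2*Real.pi/N) * ∑ i ∈ Finset.range N, Real.exp (-(p/(2*k*N)))^i) ≤ 8 := by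
      calc (1 + (2*p+0.37)/(2*Real.pi*k)) *
            ((2*Real.pi/N) * ∑ i ∈ Finset.range N, Real.exp (-(p/(2*k*N)))^i)
          ≤ (1 + (w + 0.185)/Real.pi) *
            ((2*Real.pi/N) * ∑ i ∈ Finset.range N, Real.exp (-(p/(2*k*N)))^i) :=
            mul_le_mul_of_nonneg_right hCle hS0
        _ ≤ 8 := by nlinarith [hbound]
    calc (1 + (2*p+0.37)/(2*Real.pi*k)) * (2*Real.pi*k) ^ (-p) *
            ((2*Real.pi/N) * ∑ i ∈ Finset.range N, Real.exp (-(p/(2*k*N)))^i)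
        = (2*Real.pi*k) ^ (-p) * ((1 + (2*p+0.37)/(2*Real.pi*k)) *
            ((2*Real.pi/N) * ∑ i ∈ Finset.range N, Real.exp (-(p/(2*k*N)))^i)) := by ring
      _ ≤ (2*Real.pi*k) ^ (-p) * 8 := mul_le_mul_of_nonneg_left h1 (le_of_lt hapn)
      _ = 8 * (2*Real.pi*k) ^ (-p) := by ring
  have hF0 : (0:ℝ) < 1 + (w + 0.185)/Real.pi := by positivity
  rcases le_or_gt w 4 with hw4 | hw4
  -- Branch A : N = 48
  · apply main 48 (by norm_num)
    have hcast : Real.exp (-(p/(2*(k:ℝ)*((48:ℕ):ℝ)))) = Real.exp (-(w/96)) := by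
      congr 1
      rw [hw_def]
      push_cast
      ring
    set σ : ℝ := Real.exp (-(w/96)) with hσ_def
    set E : ℝ := Real.exp (-(w/2)) with hE_def
    have hσ0 : 0 < σ := Real.exp_pos _
    have hσ1 : σ < 1 := Real.exp_lt_one_iff.2 (by nlinarith)
    have h1σ : 0 < 1 - σ := by linarith
    have hE0 : 0 < E := Real.exp_pos _
    have hE1 : E ≤ 1 := Real.exp_le_one_iff.2 (by nlinarith)
    have hσ48 : σ^(48:ℕ) = E := by
      rw [hσ_def, hE_def, ← Real.exp_nat_mul]
      congr 1
      ring
    have hgeom : ∑ i ∈ Finset.range 48, σ ^ i = (1 - E)/(1 - σ) := by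
      rw [geom_sum_eq hσ1.ne 48, hσ48]
      rw [show E - 1 = -(1 - E) from by ring, show σ - 1 = -(1 - σ) from by ring,
        neg_div_neg_eq]
    have hexp96 : σ * (96 + w) ≤ 96 := by
      have hh := Real.add_one_le_exp (w/96)
      have hmul : σ * Real.exp (w/96) = 1 := by
        rw [hσ_def, ← Real.exp_add]; simp
      nlinarith
    have hfact : 1 ≤ (1 + 96/w) * (1 - σ) := by
      have heq : (1 + 96/w) * (1 - σ) = (w + 96 - (96 + w)*σ)/w := by
        field_simp; ring
      rw [heq, le_div_iff₀ hw]
      linarith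
    have hSle : ∑ i ∈ Finset.range 48, σ ^ i ≤ (1 + 96/w) * (1 - E) := by
      rw [hgeom, div_le_iff₀ h1σ]
      have h1E : (0:ℝ) ≤ 1 - E := by linarith
      nlinarith [mul_le_mul_of_nonneg_left hfact h1E]
    rw [hcast]
    calc (2*Real.pi/((48:ℕ):ℝ) * ∑ i ∈ Finset.range 48, σ ^ i) * (1 + (w + 0.185)/Real.pi)
        ≤ (2*Real.pi/((48:ℕ):ℝ) * ((1 + 96/w) * (1 - E))) * (1 + (w + 0.185)/Real.pi) := by
          apply mul_le_mul_of_nonneg_right _ hF0.le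
          apply mul_le_mul_of_nonneg_left hSle (by positivity)
      _ = (1 + (w + 0.185)/Real.pi) * ((2*Real.pi/48) * ((1 + 96/w) * (1 - E))) := by
          norm_num; ring
      _ ≤ 8 := lemA hw hw4
  -- Branch B : N = 50 * ⌈p⌉₊
  · set N : ℕ := 50 * ⌈p⌉₊ with hN_def
    have hceil : p ≤ (⌈p⌉₊ : ℝ) := Nat.le_ceil p
    have hceil1 : 1 ≤ ⌈p⌉₊ := by
      rw [Nat.one_le_iff_ne_zero, ← Nat.pos_iff_ne_zero]
      exact Nat.ceil_pos.2 hp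
    have hN1 : 1 ≤ N := by
      rw [hN_def]; omega
    have hNr : (50:ℝ) * p ≤ (N:ℝ) := by
      rw [hN_def]; push_cast; nlinarith
    have hNr0 : (0:ℝ) < (N:ℝ) := by
      have : (1:ℝ) ≤ (N:ℝ) := by exact_mod_cast hN1
      linarith
    apply main N hN1
    set u : ℝ := p/(2*(k:ℝ)*(N:ℝ)) with hu_def
    have hu : 0 < u := by rw [hu_def]; positivity
    set σ : ℝ := Real.exp (-u) with hσ_def
    have hσ0 : 0 < σ := Real.exp_pos _
    have hσ1 : σ < 1 := Real.exp_lt_one_iff.2 (by nlinarith)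
    have h1σ : 0 < 1 - σ := by linarith
    have hfrac : u/(1+u) ≤ 1 - σ := by
      have hh := Real.add_one_le_exp u
      have hmul : σ * Real.exp u = 1 := by rw [hσ_def, ← Real.exp_add]; simp
      rw [div_le_iff₀ (by positivity)]
      nlinarith
    have hSle : ∑ i ∈ Finset.range N, σ ^ i ≤ (1+u)/u := by
      have hgm := geom_sum_mul σ N
      have hσN : 0 ≤ σ^N := by positivity
      have h2 : (∑ i ∈ Finset.range N, σ ^ i) * (1 - σ) ≤ 1 := by
        nlinarith [hgm]
      have hgt : 1 ≤ ((1+u)/u) * (1 - σ) := by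
        have hm := mul_le_mul_of_nonneg_left hfrac (by positivity : (0:ℝ) ≤ (1+u)/u)
        have : ((1+u)/u) * (u/(1+u)) = 1 := by field_simp
        linarith
      exact le_of_mul_le_mul_right (h2.trans hgt) h1σ
    have hstep : (2*Real.pi/(N:ℝ)) * ∑ i ∈ Finset.range N, σ ^ i
        ≤ 2*Real.pi/(50*w) + 4*Real.pi/w := by
      have h3 : (2*Real.pi/(N:ℝ)) * ((1+u)/u) = 2*Real.pi/(N:ℝ) + 4*Real.pi*(k:ℝ)/p := by
        rw [hu_def]
        field_simp
        ring
      have h4 : (2*Real.pi/(N:ℝ)) * ∑ i ∈ Finset.range N, σ ^ i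
          ≤ 2*Real.pi/(N:ℝ) + 4*Real.pi*(k:ℝ)/p := by
        rw [← h3]
        apply mul_le_mul_of_nonneg_left hSle (by positivity)
      have h5 : 2*Real.pi/(N:ℝ) ≤ 2*Real.pi/(50*w) := by
        apply div_le_div_of_nonneg_left (by positivity) (by positivity)
        nlinarith
      have h6 : 4*Real.pi*(k:ℝ)/p = 4*Real.pi/w := by
        rw [hw_def]
        field_simp
      linarith [h4, h5, h6 ▸ le_refl (4*Real.pi*(k:ℝ)/p)]
    calc ((2*Real.pi/(N:ℝ)) * ∑ i ∈ Finset.range N, σ ^ i) * (1 + (w + 0.185)/Real.pi)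
        ≤ (2*Real.pi/(50*w) + 4*Real.pi/w) * (1 + (w + 0.185)/Real.pi) := by
          apply mul_le_mul_of_nonneg_right hstep hF0.le
      _ = (1 + (w + 0.185)/Real.pi) * (2*Real.pi/(50*w) + 4*Real.pi/w) := by ring
      _ ≤ 8 := lemB hw4.le


end SpiralAux

theorem hausdorffMeasure_spiralTurn (p q : ℝ) (hp : 0 < p) (hpq : p ≤ q)
    (k : ℕ) (hk : 1 ≤ k) :
    ENNReal.ofReal ((2 * Real.pi * k) ^ (-p)) ≤ μH[1] (spiralTurn p q k) ∧
    μH[1] (spiralTurn p q k) ≤ ENNReal.ofReal (8 * (2 * Real.pi * k) ^ (-p)) := by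
  exact ⟨SpiralAux.turn_measure_ge p q hp k hk, SpiralAux.turn_upper p q hp hpq k hk⟩
end

section
/- Let 0 < p ≤ q. There exist constants c, C > 0 depending only on p, and an integer M₀, such that for all integers N > M ≥ M₀ the following hold: if p < 1 then c(N^{1−p} − M^{1−p}) ≤ Σ_{k=M}^{N} H¹(S_{p,q}^k) ≤ C(N^{1−p} − M^{1−p}); if p = 1 then c(log N − log M) ≤ Σ_{k=M}^{N} H¹(S_{p,q}^k) ≤ C(log N − log M); and if p > 1 then c(M^{1−p} − N^{1−p}) ≤ Σ_{k=M}^{N} H¹(S_{p,q}^k) ≤ C(M^{1−p} − N^{1−p}). -/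
open Set Metric MeasureTheory

open Real
open scoped ENNReal NNReal

section SpiralAux

noncomputable def spiralMap (p q : ℝ) (t : ℝ) : ℂ :=
  ((t ^ (-p) * Real.cos t : ℝ) : ℂ) + ((t ^ (-q) * Real.sin t : ℝ) : ℂ) * Complex.I

lemma spiralTurn_eq (p q : ℝ) (k : ℕ) :
    spiralTurn p q k = spiralMap p q '' Set.Ico (2 * π * k) (2 * π * (k + 1)) := by
  ext z
  constructor
  · rintro ⟨t, h1, h2, h3⟩; exact ⟨t, ⟨h1, h2⟩, h3.symm⟩
  · rintro ⟨t, ⟨h1, h2⟩, h3⟩; exact ⟨t, h1, h2, h3.symm⟩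

lemma hasDerivAt_spiralMap (p q : ℝ) {t : ℝ} (ht : t ≠ 0) :
    HasDerivAt (spiralMap p q)
      ((((-p * t ^ (-p - 1)) * Real.cos t + t ^ (-p) * (-Real.sin t) : ℝ) : ℂ) +
       (((-q * t ^ (-q - 1)) * Real.sin t + t ^ (-q) * Real.cos t : ℝ) : ℂ) * Complex.I) t := by
  have h1 : HasDerivAt (fun t : ℝ => t ^ (-p) * Real.cos t)
      ((-p * t ^ (-p - 1)) * Real.cos t + t ^ (-p) * (-Real.sin t)) t :=
    (Real.hasDerivAt_rpow_const (Or.inl ht)).mul (Real.hasDerivAt_cos t)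
  have h2 : HasDerivAt (fun t : ℝ => t ^ (-q) * Real.sin t)
      ((-q * t ^ (-q - 1)) * Real.sin t + t ^ (-q) * Real.cos t) t :=
    (Real.hasDerivAt_rpow_const (Or.inl ht)).mul (Real.hasDerivAt_sin t)
  exact h1.ofReal_comp.add (h2.ofReal_comp.mul_const Complex.I)

-- derivative norm bound
lemma spiral_deriv_bound (p q : ℝ) (hp : 0 < p) (hpq : p ≤ q) (a t : ℝ) (h1 : 1 ≤ a) (hat : a ≤ t) :
    |(-p * t ^ (-p - 1)) * Real.cos t + t ^ (-p) * (-Real.sin t)| +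
    |(-q * t ^ (-q - 1)) * Real.sin t + t ^ (-q) * Real.cos t| ≤ (p + q + 2) * a ^ (-p) := by
  have ht : (1:ℝ) ≤ t := h1.trans hat
  have ht0 : (0:ℝ) < t := by linarith
  have ha0 : (0:ℝ) < a := by linarith
  have hp1 : t ^ (-p - 1) ≤ t ^ (-p) := Real.rpow_le_rpow_of_exponent_le ht (by linarith)
  have hq1 : t ^ (-q - 1) ≤ t ^ (-q) := Real.rpow_le_rpow_of_exponent_le ht (by linarith)
  have hqp : t ^ (-q) ≤ t ^ (-p) := Real.rpow_le_rpow_of_exponent_le ht (by linarith)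
  have hta : t ^ (-p) ≤ a ^ (-p) := Real.rpow_le_rpow_of_nonpos ha0 hat (by linarith)
  have h01 : (0:ℝ) ≤ t ^ (-p-1) := (Real.rpow_pos_of_pos ht0 _).le
  have h02 : (0:ℝ) ≤ t ^ (-q-1) := (Real.rpow_pos_of_pos ht0 _).le
  have h03 : (0:ℝ) ≤ t ^ (-p) := (Real.rpow_pos_of_pos ht0 _).le
  have h04 : (0:ℝ) ≤ t ^ (-q) := (Real.rpow_pos_of_pos ht0 _).le
  have e1 : |(-p * t ^ (-p - 1)) * Real.cos t + t ^ (-p) * (-Real.sin t)| ≤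
      p * t ^ (-p-1) + t ^ (-p) := by
    refine (abs_add_le _ _).trans ?_
    simp only [abs_mul, abs_neg, abs_of_pos hp, abs_of_nonneg h01, abs_of_nonneg h03]
    have := Real.abs_cos_le_one t; have := Real.abs_sin_le_one t
    nlinarith [mul_pos hp (Real.rpow_pos_of_pos ht0 (-p-1))]
  have e2 : |(-q * t ^ (-q - 1)) * Real.sin t + t ^ (-q) * Real.cos t| ≤
      q * t ^ (-q-1) + t ^ (-q) := by
    refine (abs_add_le _ _).trans ?_
    simp only [abs_mul, abs_neg, abs_of_pos (hp.trans_le hpq), abs_of_nonneg h02,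
      abs_of_nonneg h04]
    have := Real.abs_cos_le_one t; have := Real.abs_sin_le_one t
    nlinarith [mul_pos (hp.trans_le hpq) (Real.rpow_pos_of_pos ht0 (-q-1))]
  have hq0 : 0 < q := hp.trans_le hpq
  nlinarith [mul_le_mul_of_nonneg_left hp1 hp.le, mul_le_mul_of_nonneg_left hq1 hq0.le,
    mul_le_mul_of_nonneg_left hqp hq0.le, mul_le_mul_of_nonneg_left hta hq0.le,
    mul_le_mul_of_nonneg_left hta hp.le]

lemma turn_upper (p q : ℝ) (hp : 0 < p) (hpq : p ≤ q) (k : ℕ) (hk : 1 ≤ k) :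
    μH[1] (spiralMap p q '' Set.Ico (2 * π * k) (2 * π * (k + 1))) ≤
      ENNReal.ofReal ((p + q + 2) * (2 * π) * ((2 * π) ^ (-p) * (k : ℝ) ^ (-p))) := by
  set a : ℝ := 2 * π * k with ha
  set b : ℝ := 2 * π * (k + 1) with hb
  have hk1 : (1:ℝ) ≤ k := by exact_mod_cast hk
  have hpi : (3:ℝ) ≤ π := by linarith [Real.pi_gt_three]
  have ha1 : (1:ℝ) ≤ a := by nlinarith
  have ha0 : (0:ℝ) < a := by linarith
  set L : ℝ := (p + q + 2) * a ^ (-p) with hL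
  have hL0 : 0 ≤ L := by
    have h := (Real.rpow_pos_of_pos ha0 (-p)).le
    have : (0:ℝ) ≤ p + q + 2 := by linarith
    rw [hL]; exact mul_nonneg this h
  have hlip : LipschitzOnWith L.toNNReal (spiralMap p q) (Set.Ico a b) := by
    apply (convex_Ico a b).lipschitzOnWith_of_nnnorm_hasDerivWithin_le
      (f' := fun t => (((-p * t ^ (-p - 1)) * Real.cos t + t ^ (-p) * (-Real.sin t) : ℝ) : ℂ) +
       (((-q * t ^ (-q - 1)) * Real.sin t + t ^ (-q) * Real.cos t : ℝ) : ℂ) * Complex.I)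
    · intro x hx
      exact (hasDerivAt_spiralMap p q (ne_of_gt (lt_of_lt_of_le ha0 hx.1))).hasDerivWithinAt
    · intro x hx
      rw [Real.le_toNNReal_iff_coe_le hL0, coe_nnnorm]
      calc ‖(((-p * x ^ (-p - 1)) * Real.cos x + x ^ (-p) * (-Real.sin x) : ℝ) : ℂ) +
          (((-q * x ^ (-q - 1)) * Real.sin x + x ^ (-q) * Real.cos x : ℝ) : ℂ) * Complex.I‖
          ≤ ‖(((-p * x ^ (-p - 1)) * Real.cos x + x ^ (-p) * (-Real.sin x) : ℝ) : ℂ)‖ +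
            ‖(((-q * x ^ (-q - 1)) * Real.sin x + x ^ (-q) * Real.cos x : ℝ) : ℂ) * Complex.I‖ :=
          norm_add_le _ _
        _ = |(-p * x ^ (-p - 1)) * Real.cos x + x ^ (-p) * (-Real.sin x)| +
            |(-q * x ^ (-q - 1)) * Real.sin x + x ^ (-q) * Real.cos x| := by
          rw [norm_mul, Complex.norm_I, mul_one, Complex.norm_real, Complex.norm_real,
            Real.norm_eq_abs, Real.norm_eq_abs]
        _ ≤ L := spiral_deriv_bound p q hp hpq a x ha1 hx.1
  have h2 := hlip.hausdorffMeasure_image_le (d := 1) zero_le_one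
  refine h2.trans ?_
  have hIco : μH[1] (Set.Ico a b) = ENNReal.ofReal (b - a) := by
    rw [MeasureTheory.hausdorffMeasure_real, Real.volume_Ico]
  rw [hIco, ENNReal.rpow_one]
  have : (L.toNNReal : ℝ≥0∞) = ENNReal.ofReal L := rfl
  rw [this, ← ENNReal.ofReal_mul hL0]
  apply ENNReal.ofReal_le_ofReal
  have hba : b - a = 2 * π := by rw [hb, ha]; ring
  rw [hba, hL]
  have hmul : a ^ (-p) = (2*π) ^ (-p) * (k:ℝ) ^ (-p) := by
    rw [ha, ← Real.mul_rpow (by positivity) (by positivity)]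
  rw [hmul]; ring_nf; rfl

lemma lipschitz_re : LipschitzWith 1 Complex.re := by
  apply LipschitzWith.of_dist_le_mul
  intro x y
  rw [NNReal.coe_one, one_mul, Real.dist_eq, Complex.dist_eq, ← Complex.sub_re]
  exact Complex.abs_re_le_norm _

lemma turn_lower (p q : ℝ) (hp : 0 < p) (hpq : p ≤ q) (k : ℕ) (hk : 1 ≤ k) :
    ENNReal.ofReal ((2 * π) ^ (-p) * (k : ℝ) ^ (-p)) ≤ μH[1] (spiralTurn p q k) := by
  set a : ℝ := 2 * π * k with ha
  have hk1 : (1:ℝ) ≤ k := by exact_mod_cast hk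
  have hpi : (3:ℝ) ≤ π := by linarith [Real.pi_gt_three]
  have ha0 : (0:ℝ) < a := by rw [ha]; nlinarith
  have hpi0 : (0:ℝ) < π := by linarith
  set f : ℝ → ℝ := fun t => t ^ (-p) * Real.cos t with hf
  -- values at endpoints
  have hcosa : Real.cos a = 1 := by
    rw [ha, show 2 * π * (k:ℝ) = (k:ℝ) * (2 * π) by ring]
    exact_mod_cast Real.cos_nat_mul_two_pi k
  have hcosapi : Real.cos (a + π) = -1 := by
    rw [ha, show 2 * π * (k:ℝ) + π = (k:ℝ) * (2 * π) + π by ring]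
    exact_mod_cast Real.cos_nat_mul_two_pi_add_pi k
  have hfa : f a = a ^ (-p) := by rw [hf]; simp [hcosa]
  have hfapi : f (a + π) = -((a + π) ^ (-p)) := by rw [hf]; simp [hcosapi]
  -- IVT
  have hcont : ContinuousOn f (Set.Icc a (a + π)) := by
    intro t htm
    have ht0 : t ≠ 0 := ne_of_gt (lt_of_lt_of_le ha0 htm.1)
    exact ((Real.continuousAt_rpow_const t (-p) (Or.inl ht0)).mul
      (Real.continuous_cos.continuousAt)).continuousWithinAt
  have hIVT : Set.Icc (f (a + π)) (f a) ⊆ f '' Set.Icc a (a + π) :=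
    intermediate_value_Icc' (by linarith) hcont
  have himg : f '' Set.Icc a (a + π) ⊆ Complex.re '' spiralTurn p q k := by
    rintro x ⟨t, htm, rfl⟩
    refine ⟨(t ^ (-p) * Real.cos t : ℝ) + (t ^ (-q) * Real.sin t : ℝ) * Complex.I, ⟨t, ?_, ?_, rfl⟩, ?_⟩
    · exact htm.1
    · have : 2 * π * ((k:ℝ) + 1) = a + 2 * π := by rw [ha]; ring
      rw [this]; linarith [htm.2]
    · simp [Complex.add_re, Complex.mul_re, Complex.I_re, Complex.I_im, Complex.ofReal_re,
        Complex.ofReal_im, hf, Complex.cos_ofReal_re]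
  -- measure of the interval
  have hmeas : μH[1] (Set.Icc (f (a + π)) (f a)) = ENNReal.ofReal (f a - f (a + π)) := by
    rw [MeasureTheory.hausdorffMeasure_real, Real.volume_Icc]
  have h1 : ENNReal.ofReal ((2 * π) ^ (-p) * (k : ℝ) ^ (-p)) ≤
      μH[1] (Set.Icc (f (a + π)) (f a)) := by
    rw [hmeas]
    apply ENNReal.ofReal_le_ofReal
    have h2 : (2 * π) ^ (-p) * (k:ℝ) ^ (-p) = a ^ (-p) := by
      rw [ha, ← Real.mul_rpow (by positivity) (by positivity)]
    rw [h2, hfa, hfapi]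
    have := (Real.rpow_pos_of_pos (by linarith : (0:ℝ) < a + π) (-p)).le
    linarith
  have h3 : μH[1] (Set.Icc (f (a + π)) (f a)) ≤ μH[1] (Complex.re '' spiralTurn p q k) :=
    measure_mono (hIVT.trans himg)
  have h4 : μH[1] (Complex.re '' spiralTurn p q k) ≤ μH[1] (spiralTurn p q k) := by
    have := lipschitz_re.hausdorffMeasure_image_le (d := 1) zero_le_one (spiralTurn p q k)
    simpa using this
  exact h1.trans (h3.trans h4)

lemma mvt_rpow (s : ℝ) (k : ℕ) (hk : 1 ≤ k) :
    ∃ ξ : ℝ, (k:ℝ) < ξ ∧ ξ < (k:ℝ) + 1 ∧ ((k:ℝ) + 1) ^ s - (k:ℝ) ^ s = s * ξ ^ (s - 1) := by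
  have hk1 : (1:ℝ) ≤ k := by exact_mod_cast hk
  have hcont : ContinuousOn (fun x : ℝ => x ^ s) (Set.Icc (k:ℝ) ((k:ℝ) + 1)) := by
    intro t htm
    exact (Real.continuousAt_rpow_const t s (Or.inl (by nlinarith [htm.1]))).continuousWithinAt
  obtain ⟨ξ, hξ, heq⟩ := exists_hasDerivAt_eq_slope (fun x : ℝ => x ^ s)
    (fun x => s * x ^ (s - 1)) (by linarith : (k:ℝ) < (k:ℝ) + 1) hcont
    (fun x hx => Real.hasDerivAt_rpow_const (Or.inl (by nlinarith [hx.1])))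
  refine ⟨ξ, hξ.1, hξ.2, ?_⟩
  rw [heq]; simp

lemma mvt_log (k : ℕ) (hk : 1 ≤ k) :
    ∃ ξ : ℝ, (k:ℝ) < ξ ∧ ξ < (k:ℝ) + 1 ∧ Real.log ((k:ℝ) + 1) - Real.log k = ξ⁻¹ := by
  have hk1 : (1:ℝ) ≤ k := by exact_mod_cast hk
  have hcont : ContinuousOn Real.log (Set.Icc (k:ℝ) ((k:ℝ) + 1)) := by
    intro t htm
    exact (Real.continuousAt_log (by nlinarith [htm.1])).continuousWithinAt
  obtain ⟨ξ, hξ, heq⟩ := exists_hasDerivAt_eq_slope Real.log (fun x => x⁻¹)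
    (by linarith : (k:ℝ) < (k:ℝ) + 1) hcont
    (fun x hx => Real.hasDerivAt_log (by nlinarith [hx.1]))
  refine ⟨ξ, hξ.1, hξ.2, ?_⟩
  rw [heq]; simp

lemma telescope (f : ℕ → ℝ) {M N : ℕ} (h : M ≤ N) :
    ∑ k ∈ Finset.Icc M N, (f (k + 1) - f k) = f (N + 1) - f M := by
  rw [← Finset.Ico_add_one_right_eq_Icc, Finset.sum_Ico_eq_sum_range]
  have h2 := Finset.sum_range_sub (fun i => f (M + i)) (N + 1 - M)
  have h3 : M + (N + 1 - M) = N + 1 := by omega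
  rw [h3] at h2
  simp only [Nat.add_zero] at h2
  rw [← h2]
  apply Finset.sum_congr rfl
  intro i _
  congr 2


lemma incr (p : ℝ) (hp : 0 < p) (k : ℕ) (hk : 1 ≤ k) :
    ∃ ξ : ℝ, ((k:ℝ) + 1) ^ (1 - p) - (k:ℝ) ^ (1 - p) = (1 - p) * ξ ^ (-p) ∧
      (2 ^ p)⁻¹ * (k:ℝ) ^ (-p) ≤ ξ ^ (-p) ∧ ξ ^ (-p) ≤ (k:ℝ) ^ (-p) ∧
      ((k:ℝ) + 1) ^ (-p) ≤ ξ ^ (-p) := by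
  have hk1 : (1:ℝ) ≤ k := by exact_mod_cast hk
  obtain ⟨ξ, h1, h2, h3⟩ := mvt_rpow (1 - p) k hk
  have hξ0 : (0:ℝ) < ξ := by linarith
  have hk0 : (0:ℝ) < k := by linarith
  refine ⟨ξ, by rw [h3]; ring_nf, ?_, ?_, ?_⟩
  · have e1 : ((2:ℝ) * k) ^ (-p) ≤ ξ ^ (-p) :=
      Real.rpow_le_rpow_of_nonpos hξ0 (by linarith) (by linarith)
    have e2 : ((2:ℝ) * k) ^ (-p) = (2:ℝ) ^ (-p) * (k:ℝ) ^ (-p) :=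
      Real.mul_rpow (by norm_num) hk0.le
    have e3 : (2:ℝ) ^ (-p) = ((2:ℝ) ^ p)⁻¹ := Real.rpow_neg (by norm_num) p
    rw [e2, e3] at e1; exact e1
  · exact Real.rpow_le_rpow_of_nonpos hk0 h1.le (by linarith)
  · exact Real.rpow_le_rpow_of_nonpos hξ0 h2.le (by linarith)

lemma incr_log (k : ℕ) (hk : 1 ≤ k) :
    ∃ ξ : ℝ, Real.log ((k:ℝ) + 1) - Real.log k = ξ⁻¹ ∧
      (2:ℝ)⁻¹ * ((k:ℝ))⁻¹ ≤ ξ⁻¹ ∧ ξ⁻¹ ≤ ((k:ℝ))⁻¹ ∧ (((k:ℝ)) + 1)⁻¹ ≤ ξ⁻¹ := by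
  have hk1 : (1:ℝ) ≤ k := by exact_mod_cast hk
  obtain ⟨ξ, h1, h2, h3⟩ := mvt_log k hk
  have hξ0 : (0:ℝ) < ξ := by linarith
  have hk0 : (0:ℝ) < k := by linarith
  refine ⟨ξ, h3, ?_, ?_, ?_⟩
  · rw [← mul_inv]
    exact inv_anti₀ hξ0 (by linarith)
  · exact inv_anti₀ hk0 h1.le
  · exact inv_anti₀ hξ0 (by linarith)

-- case p < 1
lemma sum_lt_bounds (p : ℝ) (hp : 0 < p) (hp1 : p < 1) {M N : ℕ} (hM : 1 ≤ M) (hMN : M < N) :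
    ((N:ℝ) ^ (1 - p) - (M:ℝ) ^ (1 - p) ≤ (1 - p) * ∑ k ∈ Finset.Icc M N, (k:ℝ) ^ (-p)) ∧
    ((1 - p) * ∑ k ∈ Finset.Icc M N, (k:ℝ) ^ (-p) ≤
      2 * 2 ^ p * ((N:ℝ) ^ (1 - p) - (M:ℝ) ^ (1 - p))) := by
  set s : ℝ := 1 - p with hs
  have hs0 : 0 < s := by rw [hs]; linarith
  set f : ℕ → ℝ := fun n => (n:ℝ) ^ s with hf
  have h2p : (0:ℝ) < 2 ^ p := Real.rpow_pos_of_pos (by norm_num) p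
  have key : ∀ k ∈ Finset.Icc M N,
      (f (k+1) - f k ≤ s * (k:ℝ) ^ (-p)) ∧ (s * (k:ℝ) ^ (-p) ≤ 2 ^ p * (f (k+1) - f k)) := by
    intro k hkm
    have hk : 1 ≤ k := hM.trans (Finset.mem_Icc.mp hkm).1
    obtain ⟨ξ, he, hl, hu, _⟩ := incr p hp k hk
    rw [← hs] at he
    have hfe : f (k+1) - f k = s * ξ ^ (-p) := by
      rw [hf]; push_cast; rw [he]
    constructor
    · rw [hfe]; nlinarith
    · rw [hfe]
      have e0 : (2 ^ p * s) * ((2 ^ p)⁻¹ * (k:ℝ) ^ (-p)) = s * (k:ℝ) ^ (-p) := by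
        field_simp
      have e1 := mul_le_mul_of_nonneg_left hl (mul_nonneg h2p.le hs0.le)
      rw [e0] at e1
      linarith [e1]
  have htel : ∑ k ∈ Finset.Icc M N, (f (k+1) - f k) = f (N+1) - f M :=
    telescope f hMN.le
  have hsum1 : f (N+1) - f M ≤ s * ∑ k ∈ Finset.Icc M N, (k:ℝ) ^ (-p) := by
    rw [← htel, Finset.mul_sum]
    exact Finset.sum_le_sum fun k hk => (key k hk).1
  have hsum2 : s * ∑ k ∈ Finset.Icc M N, (k:ℝ) ^ (-p) ≤ 2 ^ p * (f (N+1) - f M) := by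
    rw [← htel, Finset.mul_sum, Finset.mul_sum]
    exact Finset.sum_le_sum fun k hk => (key k hk).2
  -- tail estimates
  have hN : 1 ≤ N := hM.trans hMN.le
  obtain ⟨ξ₁, he1, _, hu1, _⟩ := incr p hp N hN
  rw [← hs] at he1
  have hNm : 1 ≤ N - 1 := by omega
  obtain ⟨ξ₂, he2, _, _, hl2⟩ := incr p hp (N-1) hNm
  rw [← hs] at he2
  have hcast : ((N-1:ℕ):ℝ) = (N:ℝ) - 1 := by
    have : (1:ℕ) ≤ N := hN; push_cast [this]; ring
  rw [hcast] at he2 hl2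
  have he2' : (N:ℝ) ^ s - ((N:ℝ) - 1) ^ s = s * ξ₂ ^ (-p) := by
    rw [← he2]; norm_num
  have hl2' : (N:ℝ) ^ (-p) ≤ ξ₂ ^ (-p) := by
    have : ((N:ℝ) - 1) + 1 = (N:ℝ) := by ring
    rwa [this] at hl2
  have hMle : (M:ℝ) ^ s ≤ ((N:ℝ) - 1) ^ s := by
    apply Real.rpow_le_rpow (by positivity) _ hs0.le
    have : M ≤ N - 1 := by omega
    have := (Nat.cast_le (α := ℝ)).mpr this
    rw [hcast] at this; exact this
  -- f(N+1) - f N ≤ s N^{-p} ≤ f N - f (N-1) ≤ f N - f M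
  have hfN : f (N+1) - f N = s * ξ₁ ^ (-p) := by rw [hf]; push_cast; rw [he1]
  have htail : f (N+1) - f N ≤ (N:ℝ) ^ s - (M:ℝ) ^ s := by
    rw [hfN]
    have h1 : s * ξ₁ ^ (-p) ≤ s * (N:ℝ) ^ (-p) := by nlinarith
    have h2 : s * (N:ℝ) ^ (-p) ≤ s * ξ₂ ^ (-p) := by nlinarith
    nlinarith
  have hfNv : f N = (N:ℝ) ^ s := by rw [hf]
  have hfMv : f M = (M:ℝ) ^ s := by rw [hf]
  constructor
  · have hmono : f N ≤ f (N+1) := by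
      rw [hf]; push_cast
      exact Real.rpow_le_rpow (by positivity) (by linarith) hs0.le
    linarith
  · have h5 : f (N+1) - f M ≤ 2 * ((N:ℝ) ^ s - (M:ℝ) ^ s) := by
      linarith [htail, hfMv, hfNv]
    have h6 := mul_le_mul_of_nonneg_left h5 h2p.le
    linarith

-- case p > 1
lemma sum_gt_bounds (p : ℝ) (hp1 : 1 < p) {M N : ℕ} (hM : 1 ≤ M) (hMN : M < N) :
    ((M:ℝ) ^ (1 - p) - (N:ℝ) ^ (1 - p) ≤ (p - 1) * ∑ k ∈ Finset.Icc M N, (k:ℝ) ^ (-p)) ∧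
    ((p - 1) * ∑ k ∈ Finset.Icc M N, (k:ℝ) ^ (-p) ≤
      2 * 2 ^ p * ((M:ℝ) ^ (1 - p) - (N:ℝ) ^ (1 - p))) := by
  have hp : 0 < p := by linarith
  have hσ0 : (0:ℝ) < p - 1 := by linarith
  set g : ℕ → ℝ := fun n => -((n:ℝ) ^ (1 - p)) with hg
  have h2p : (0:ℝ) < 2 ^ p := Real.rpow_pos_of_pos (by norm_num) p
  have key : ∀ k ∈ Finset.Icc M N,
      (g (k+1) - g k ≤ (p - 1) * (k:ℝ) ^ (-p)) ∧
      ((p - 1) * (k:ℝ) ^ (-p) ≤ 2 ^ p * (g (k+1) - g k)) := by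
    intro k hkm
    have hk : 1 ≤ k := hM.trans (Finset.mem_Icc.mp hkm).1
    obtain ⟨ξ, he, hl, hu, _⟩ := incr p hp k hk
    have hfe : g (k+1) - g k = (p - 1) * ξ ^ (-p) := by
      rw [hg]; push_cast; linarith [he]
    constructor
    · rw [hfe]; nlinarith
    · rw [hfe]
      have e0 : (2 ^ p * (p - 1)) * ((2 ^ p)⁻¹ * (k:ℝ) ^ (-p)) = (p - 1) * (k:ℝ) ^ (-p) := by
        field_simp
      have e1 := mul_le_mul_of_nonneg_left hl (mul_nonneg h2p.le hσ0.le)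
      rw [e0] at e1
      linarith [e1]
  have htel : ∑ k ∈ Finset.Icc M N, (g (k+1) - g k) = g (N+1) - g M :=
    telescope g hMN.le
  have hsum1 : g (N+1) - g M ≤ (p - 1) * ∑ k ∈ Finset.Icc M N, (k:ℝ) ^ (-p) := by
    rw [← htel, Finset.mul_sum]
    exact Finset.sum_le_sum fun k hk => (key k hk).1
  have hsum2 : (p - 1) * ∑ k ∈ Finset.Icc M N, (k:ℝ) ^ (-p) ≤ 2 ^ p * (g (N+1) - g M) := by
    rw [← htel, Finset.mul_sum, Finset.mul_sum]
    exact Finset.sum_le_sum fun k hk => (key k hk).2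
  have hN : 1 ≤ N := hM.trans hMN.le
  obtain ⟨ξ₁, he1, _, hu1, _⟩ := incr p hp N hN
  have hNm : 1 ≤ N - 1 := by omega
  obtain ⟨ξ₂, he2, _, _, hl2⟩ := incr p hp (N-1) hNm
  have hcast : ((N-1:ℕ):ℝ) = (N:ℝ) - 1 := by
    have : (1:ℕ) ≤ N := hN; push_cast [this]; ring
  rw [hcast] at he2 hl2
  have hl2' : (N:ℝ) ^ (-p) ≤ ξ₂ ^ (-p) := by
    have : ((N:ℝ) - 1) + 1 = (N:ℝ) := by ring
    rwa [this] at hl2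
  have he2' : ((N:ℝ) - 1) ^ (1-p) - (N:ℝ) ^ (1-p) = (p - 1) * ξ₂ ^ (-p) := by
    have : ((N:ℝ) - 1) + 1 = (N:ℝ) := by ring
    rw [this] at he2; linarith [he2]
  have he1' : (N:ℝ) ^ (1-p) - ((N:ℝ) + 1) ^ (1-p) = (p - 1) * ξ₁ ^ (-p) := by
    linarith [he1]
  have hMle : ((N:ℝ) - 1) ^ (1-p) ≤ (M:ℝ) ^ (1-p) := by
    have hM0 : (0:ℝ) < M := by exact_mod_cast hM
    apply Real.rpow_le_rpow_of_nonpos hM0 _ (by linarith)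
    have : M ≤ N - 1 := by omega
    have := (Nat.cast_le (α := ℝ)).mpr this
    rw [hcast] at this; exact this
  have hgN1 : g (N+1) = -(((N:ℝ) + 1) ^ (1-p)) := by rw [hg]; push_cast; ring_nf
  have hgN : g N = -((N:ℝ) ^ (1-p)) := rfl
  have hgM : g M = -((M:ℝ) ^ (1-p)) := rfl
  -- tail: N^s - (N+1)^s ≤ (p-1) N^{-p} ≤ (N-1)^s - N^s ≤ M^s - N^s
  have htail : (N:ℝ) ^ (1-p) - ((N:ℝ) + 1) ^ (1-p) ≤ (M:ℝ) ^ (1-p) - (N:ℝ) ^ (1-p) := by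
    have m1 := mul_le_mul_of_nonneg_left hu1 hσ0.le
    have m2 := mul_le_mul_of_nonneg_left hl2' hσ0.le
    linarith [he1', he2', hMle, m1, m2]
  constructor
  · -- M^s - N^s ≤ M^s - (N+1)^s = g(N+1) - g M ≤ (p-1) Σ
    have hmono : ((N:ℝ) + 1) ^ (1-p) ≤ (N:ℝ) ^ (1-p) := by
      have hN0 : (0:ℝ) < N := by exact_mod_cast hN
      exact Real.rpow_le_rpow_of_nonpos hN0 (by linarith) (by linarith)
    have : g (N+1) - g M = (M:ℝ) ^ (1-p) - ((N:ℝ) + 1) ^ (1-p) := by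
      rw [hgN1, hgM]; ring
    linarith
  · have h5 : g (N+1) - g M ≤ 2 * ((M:ℝ) ^ (1-p) - (N:ℝ) ^ (1-p)) := by
      rw [hgN1, hgM]; linarith
    have h6 := mul_le_mul_of_nonneg_left h5 h2p.le
    linarith

-- case p = 1
lemma sum_one_bounds {M N : ℕ} (hM : 1 ≤ M) (hMN : M < N) :
    (Real.log N - Real.log M ≤ ∑ k ∈ Finset.Icc M N, ((k:ℝ))⁻¹) ∧
    (∑ k ∈ Finset.Icc M N, ((k:ℝ))⁻¹ ≤ 4 * (Real.log N - Real.log M)) := by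
  set f : ℕ → ℝ := fun n => Real.log (n:ℝ) with hf
  have key : ∀ k ∈ Finset.Icc M N,
      (f (k+1) - f k ≤ ((k:ℝ))⁻¹) ∧ (((k:ℝ))⁻¹ ≤ 2 * (f (k+1) - f k)) := by
    intro k hkm
    have hk : 1 ≤ k := hM.trans (Finset.mem_Icc.mp hkm).1
    obtain ⟨ξ, he, hl, hu, _⟩ := incr_log k hk
    have hfe : f (k+1) - f k = ξ⁻¹ := by rw [hf]; push_cast; rw [he]
    constructor
    · rw [hfe]; linarith
    · rw [hfe]; linarith
  have htel : ∑ k ∈ Finset.Icc M N, (f (k+1) - f k) = f (N+1) - f M :=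
    telescope f hMN.le
  have hsum1 : f (N+1) - f M ≤ ∑ k ∈ Finset.Icc M N, ((k:ℝ))⁻¹ := by
    rw [← htel]
    exact Finset.sum_le_sum fun k hk => (key k hk).1
  have hsum2 : ∑ k ∈ Finset.Icc M N, ((k:ℝ))⁻¹ ≤ 2 * (f (N+1) - f M) := by
    rw [← htel, Finset.mul_sum]
    exact Finset.sum_le_sum fun k hk => (key k hk).2
  have hN : 1 ≤ N := hM.trans hMN.le
  obtain ⟨ξ₁, he1, _, hu1, _⟩ := incr_log N hN
  have hNm : 1 ≤ N - 1 := by omega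
  obtain ⟨ξ₂, he2, _, _, hl2⟩ := incr_log (N-1) hNm
  have hcast : ((N-1:ℕ):ℝ) = (N:ℝ) - 1 := by
    have : (1:ℕ) ≤ N := hN; push_cast [this]; ring
  rw [hcast] at he2 hl2
  have hl2' : ((N:ℝ))⁻¹ ≤ ξ₂⁻¹ := by
    have : ((N:ℝ) - 1) + 1 = (N:ℝ) := by ring
    rwa [this] at hl2
  have he2' : Real.log N - Real.log ((N:ℝ) - 1) = ξ₂⁻¹ := by
    have : ((N:ℝ) - 1) + 1 = (N:ℝ) := by ring
    rwa [this] at he2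
  have hMle : Real.log M ≤ Real.log ((N:ℝ) - 1) := by
    have hM0 : (0:ℝ) < M := by exact_mod_cast hM
    apply Real.log_le_log hM0
    have : M ≤ N - 1 := by omega
    have := (Nat.cast_le (α := ℝ)).mpr this
    rw [hcast] at this; exact this
  have hfN1 : f (N+1) = Real.log ((N:ℝ) + 1) := by rw [hf]; push_cast; ring_nf
  have hfN : f N = Real.log (N:ℝ) := rfl
  have hfM : f M = Real.log (M:ℝ) := rfl
  have htail : Real.log ((N:ℝ) + 1) - Real.log N ≤ Real.log N - Real.log M := by
    linarith [he1, hu1, he2', hl2', hMle]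
  constructor
  · have hmono : Real.log (N:ℝ) ≤ Real.log ((N:ℝ) + 1) := by
      apply Real.log_le_log (by exact_mod_cast hN) (by linarith)
    linarith [hsum1, hfN1, hfM, hmono]
  · have h5 : f (N+1) - f M ≤ 2 * (Real.log N - Real.log M) := by
      linarith [htail, hfN1, hfM]
    linarith


lemma turn_upper' (p q : ℝ) (hp : 0 < p) (hpq : p ≤ q) (k : ℕ) (hk : 1 ≤ k) :
    μH[1] (spiralTurn p q k) ≤
      ENNReal.ofReal ((p + q + 2) * (2 * π) * ((2 * π) ^ (-p)) * (k : ℝ) ^ (-p)) := by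
  rw [spiralTurn_eq]
  refine (turn_upper p q hp hpq k hk).trans (ENNReal.ofReal_le_ofReal (le_of_eq (by ring)))

-- sandwich between the ENNReal sums and real sums
lemma sum_sandwich (p q : ℝ) (hp : 0 < p) (hpq : p ≤ q) {M N : ℕ} (hM : 1 ≤ M) :
    (ENNReal.ofReal ((2 * π) ^ (-p) * ∑ k ∈ Finset.Icc M N, (k:ℝ) ^ (-p)) ≤
      ∑ k ∈ Finset.Icc M N, μH[1] (spiralTurn p q k)) ∧
    (∑ k ∈ Finset.Icc M N, μH[1] (spiralTurn p q k) ≤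
      ENNReal.ofReal ((p + q + 2) * (2 * π) * ((2 * π) ^ (-p)) *
        ∑ k ∈ Finset.Icc M N, (k:ℝ) ^ (-p))) := by
  constructor
  · calc ENNReal.ofReal ((2 * π) ^ (-p) * ∑ k ∈ Finset.Icc M N, (k:ℝ) ^ (-p))
        = ∑ k ∈ Finset.Icc M N, ENNReal.ofReal ((2 * π) ^ (-p) * (k:ℝ) ^ (-p)) := by
          rw [Finset.mul_sum, ENNReal.ofReal_sum_of_nonneg]
          intro i hi
          positivity
      _ ≤ ∑ k ∈ Finset.Icc M N, μH[1] (spiralTurn p q k) :=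
          Finset.sum_le_sum fun k hk =>
            turn_lower p q hp hpq k (hM.trans (Finset.mem_Icc.mp hk).1)
  · calc ∑ k ∈ Finset.Icc M N, μH[1] (spiralTurn p q k)
        ≤ ∑ k ∈ Finset.Icc M N,
            ENNReal.ofReal ((p + q + 2) * (2 * π) * ((2 * π) ^ (-p)) * (k:ℝ) ^ (-p)) :=
          Finset.sum_le_sum fun k hk =>
            turn_upper' p q hp hpq k (hM.trans (Finset.mem_Icc.mp hk).1)
      _ = ENNReal.ofReal ((p + q + 2) * (2 * π) * ((2 * π) ^ (-p)) *
            ∑ k ∈ Finset.Icc M N, (k:ℝ) ^ (-p)) := by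
          rw [Finset.mul_sum, ENNReal.ofReal_sum_of_nonneg]
          intro i hi
          have h1 : (0:ℝ) < π := Real.pi_pos
          have h2 : (0:ℝ) ≤ (2*π) ^ (-p) := by positivity
          have h3 : (0:ℝ) ≤ ((i:ℕ):ℝ) ^ (-p) := by positivity
          have h4 : (0:ℝ) ≤ p + q + 2 := by linarith
          positivity

theorem sum_hausdorffMeasure_spiralTurn (p q : ℝ) (hp : 0 < p) (hpq : p ≤ q) :
    ∃ (c C : ℝ) (M₀ : ℕ), 0 < c ∧ 0 < C ∧ ∀ M N : ℕ, M₀ ≤ M → M < N →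
      (p < 1 →
        ENNReal.ofReal (c * ((N : ℝ) ^ (1 - p) - (M : ℝ) ^ (1 - p))) ≤
          ∑ k ∈ Finset.Icc M N, μH[1] (spiralTurn p q k) ∧
        ∑ k ∈ Finset.Icc M N, μH[1] (spiralTurn p q k) ≤
          ENNReal.ofReal (C * ((N : ℝ) ^ (1 - p) - (M : ℝ) ^ (1 - p)))) ∧
      (p = 1 →
        ENNReal.ofReal (c * (Real.log N - Real.log M)) ≤
          ∑ k ∈ Finset.Icc M N, μH[1] (spiralTurn p q k) ∧
        ∑ k ∈ Finset.Icc M N, μH[1] (spiralTurn p q k) ≤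
          ENNReal.ofReal (C * (Real.log N - Real.log M))) ∧
      (1 < p →
        ENNReal.ofReal (c * ((M : ℝ) ^ (1 - p) - (N : ℝ) ^ (1 - p))) ≤
          ∑ k ∈ Finset.Icc M N, μH[1] (spiralTurn p q k) ∧
        ∑ k ∈ Finset.Icc M N, μH[1] (spiralTurn p q k) ≤
          ENNReal.ofReal (C * ((M : ℝ) ^ (1 - p) - (N : ℝ) ^ (1 - p)))) := by
  have hπ : (0:ℝ) < π := Real.pi_pos
  set c₀ : ℝ := (2 * π) ^ (-p) with hc₀def
  set C₀ : ℝ := (p + q + 2) * (2 * π) * ((2 * π) ^ (-p)) with hC₀def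
  have hq0 : 0 < q := hp.trans_le hpq
  have hc₀ : 0 < c₀ := by rw [hc₀def]; positivity
  have hC₀ : 0 < C₀ := by
    rw [hC₀def]
    have : (0:ℝ) < p + q + 2 := by linarith
    positivity
  have h2p : (0:ℝ) < 2 ^ p := Real.rpow_pos_of_pos (by norm_num) p
  rcases lt_trichotomy p 1 with hlt | heq | hgt
  · -- p < 1
    have hs0 : (0:ℝ) < 1 - p := by linarith
    refine ⟨c₀ / (1 - p), 2 * 2 ^ p * C₀ / (1 - p), 1, by positivity, by positivity, ?_⟩
    intro M N hM hMN
    obtain ⟨hA, hB⟩ := sum_lt_bounds p hp hlt hM hMN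
    obtain ⟨hL, hU⟩ := sum_sandwich p q hp hpq (M := M) (N := N) hM
    refine ⟨fun _ => ⟨?_, ?_⟩, fun h => absurd h (by linarith), fun h => absurd h (by linarith)⟩
    · refine le_trans (ENNReal.ofReal_le_ofReal ?_) hL
      set Sr : ℝ := ∑ k ∈ Finset.Icc M N, (k:ℝ) ^ (-p) with hSr
      have e1 := mul_le_mul_of_nonneg_left hA (by positivity : (0:ℝ) ≤ c₀ / (1 - p))
      have e2 : c₀ / (1 - p) * ((1 - p) * Sr) = c₀ * Sr := by field_simp
      linarith
    · refine le_trans hU (ENNReal.ofReal_le_ofReal ?_)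
      rw [← hC₀def]
      set Sr : ℝ := ∑ k ∈ Finset.Icc M N, (k:ℝ) ^ (-p) with hSr
      have e1 := mul_le_mul_of_nonneg_left hB (by positivity : (0:ℝ) ≤ C₀ / (1 - p))
      have e2 : C₀ / (1 - p) * ((1 - p) * Sr) = C₀ * Sr := by field_simp
      have e3 : C₀ / (1 - p) * (2 * 2 ^ p * ((N:ℝ) ^ (1-p) - (M:ℝ) ^ (1-p))) =
          2 * 2 ^ p * C₀ / (1 - p) * ((N:ℝ) ^ (1-p) - (M:ℝ) ^ (1-p)) := by ring
      linarith
  · -- p = 1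
    subst heq
    refine ⟨c₀, 4 * C₀, 1, hc₀, by positivity, ?_⟩
    intro M N hM hMN
    obtain ⟨hA, hB⟩ := sum_one_bounds (M := M) (N := N) hM hMN
    obtain ⟨hL, hU⟩ := sum_sandwich 1 q (by norm_num) hpq (M := M) (N := N) hM
    have hconv : ∑ k ∈ Finset.Icc M N, (k:ℝ) ^ (-(1:ℝ)) = ∑ k ∈ Finset.Icc M N, ((k:ℝ))⁻¹ :=
      Finset.sum_congr rfl fun k _ => Real.rpow_neg_one _
    rw [hconv] at hL hU
    refine ⟨fun h => absurd h (by linarith), fun _ => ⟨?_, ?_⟩,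
      fun h => absurd h (by linarith)⟩
    · refine le_trans (ENNReal.ofReal_le_ofReal ?_) hL
      exact mul_le_mul_of_nonneg_left hA hc₀.le
    · refine le_trans hU (ENNReal.ofReal_le_ofReal ?_)
      rw [← hC₀def]
      have e1 := mul_le_mul_of_nonneg_left hB hC₀.le
      linarith
  · -- p > 1
    have hσ0 : (0:ℝ) < p - 1 := by linarith
    refine ⟨c₀ / (p - 1), 2 * 2 ^ p * C₀ / (p - 1), 1, by positivity, by positivity, ?_⟩
    intro M N hM hMN
    obtain ⟨hA, hB⟩ := sum_gt_bounds p hgt hM hMN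
    obtain ⟨hL, hU⟩ := sum_sandwich p q hp hpq (M := M) (N := N) hM
    refine ⟨fun h => absurd h (by linarith), fun h => absurd h (by linarith),
      fun _ => ⟨?_, ?_⟩⟩
    · refine le_trans (ENNReal.ofReal_le_ofReal ?_) hL
      set Sr : ℝ := ∑ k ∈ Finset.Icc M N, (k:ℝ) ^ (-p) with hSr
      have e1 := mul_le_mul_of_nonneg_left hA (by positivity : (0:ℝ) ≤ c₀ / (p - 1))
      have e2 : c₀ / (p - 1) * ((p - 1) * Sr) = c₀ * Sr := by field_simp
      linarith
    · refine le_trans hU (ENNReal.ofReal_le_ofReal ?_)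
      rw [← hC₀def]
      set Sr : ℝ := ∑ k ∈ Finset.Icc M N, (k:ℝ) ^ (-p) with hSr
      have e1 := mul_le_mul_of_nonneg_left hB (by positivity : (0:ℝ) ≤ C₀ / (p - 1))
      have e2 : C₀ / (p - 1) * ((p - 1) * Sr) = C₀ * Sr := by field_simp
      have e3 : C₀ / (p - 1) * (2 * 2 ^ p * ((M:ℝ) ^ (1-p) - (N:ℝ) ^ (1-p))) =
          2 * 2 ^ p * C₀ / (p - 1) * ((M:ℝ) ^ (1-p) - (N:ℝ) ^ (1-p)) := by ring
      linarith

end SpiralAux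
end
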